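/- arXiv:2101.00735 — 2 statements merged into one kernel-verified Lean document; each statement's English description precedes it below -/
import Mathlib

section
/- For every odd integer d ≥ 3, the set U_d^odd = (⋃_{k=0}^{(d−3)/2} C^{(d,d−2k)}) ∪ {S_d} is an unextendible product basis in ℂ^(Fin d × Fin d × Fin d): if u, v, w ∈ ℂ^d are such that the product vector u ⊗ v ⊗ w is orthogonal to every member of U_d^odd, then u ⊗ v ⊗ w = 0 (equivalently, u = 0 or v = 0 or w = 0). -/
open scoped ComplexOrder

noncomputable section

/-- the standard basis vector e_a of ℂ^d (indexed by a natural number `a`;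
it is the zero vector when `a ≥ d`). -/
def eV (d : ℕ) (a : ℕ) : Fin d → ℂ := fun k => if (k : ℕ) = a then 1 else 0

/-- ω_m = exp(2πi/m) -/
def wN (m : ℕ) : ℂ := Complex.exp (2 * Real.pi * Complex.I / m)

/-- η_i^{(d−2k)} = Σ_{t=k}^{d−2−k} ω_{d−1−2k}^{i(t−k)} e_t -/
def etaG (d k i : ℕ) : Fin d → ℂ :=
  fun a => ∑ t ∈ Finset.Icc k (d - 2 - k), wN (d - 1 - 2 * k) ^ (i * (t - k)) * eV d t a

/-- ξ_j^{(d−2k)} = Σ_{t=k}^{d−2−k} ω_{d−1−2k}^{j(t−k)} e_{t+1} -/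
def xiG (d k j : ℕ) : Fin d → ℂ :=
  fun a => ∑ t ∈ Finset.Icc k (d - 2 - k), wN (d - 1 - 2 * k) ^ (j * (t - k)) * eV d (t + 1) a

/-- the product vector u ⊗ v ⊗ w -/
def tpv (d : ℕ) (u v w : Fin d → ℂ) : Fin d × Fin d × Fin d → ℂ :=
  fun p => u p.1 * v p.2.1 * w p.2.2

/-- the stopper state S_d = (Σ e_i) ⊗ (Σ e_j) ⊗ (Σ e_k) -/
def stopD (d : ℕ) : Fin d × Fin d × Fin d → ℂ :=
  tpv d (fun a => ∑ i ∈ Finset.range d, eV d i a)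
    (fun a => ∑ i ∈ Finset.range d, eV d i a)
    (fun a => ∑ i ∈ Finset.range d, eV d i a)

/-- the set C^{(d,d−2k)}, the union of the six families A₁, A₂, A₃, B₁, B₂, B₃
indexed by (i,j) ∈ ℤ_{d−1−2k} × ℤ_{d−1−2k} \ {(0,0)} -/
def Cset (d k : ℕ) : Set (Fin d × Fin d × Fin d → ℂ) :=
  {x | ∃ i j : ℕ, i < d - 1 - 2 * k ∧ j < d - 1 - 2 * k ∧ ¬(i = 0 ∧ j = 0) ∧
      (x = tpv d (xiG d k j) (eV d k) (etaG d k i) ∨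
       x = tpv d (xiG d k j) (etaG d k i) (eV d (d - 1 - k)) ∨
       x = tpv d (eV d (d - 1 - k)) (xiG d k j) (etaG d k i) ∨
       x = tpv d (etaG d k i) (eV d (d - 1 - k)) (xiG d k j) ∨
       x = tpv d (etaG d k i) (xiG d k j) (eV d k) ∨
       x = tpv d (eV d k) (etaG d k i) (xiG d k j))}

/-- with φ_i = e_{(d−2)/2} + (−1)^i e_{d/2}, the set
A^{(d,0)} = { φ_r ⊗ φ_s ⊗ φ_t : (r,s,t) ≠ (0,0,0) } (for even d) -/
def phiE (d i : ℕ) : Fin d → ℂ :=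
  fun a => eV d ((d - 2) / 2) a + (-1 : ℂ) ^ i * eV d (d / 2) a

def A0set (d : ℕ) : Set (Fin d × Fin d × Fin d → ℂ) :=
  {x | ∃ r s t : ℕ, r < 2 ∧ s < 2 ∧ t < 2 ∧ ¬(r = 0 ∧ s = 0 ∧ t = 0) ∧
      x = tpv d (phiE d r) (phiE d s) (phiE d t)}

/-- U_d^odd = (⋃_{k=0}^{(d−3)/2} C^{(d,d−2k)}) ∪ {S_d} -/
def Uodd (d : ℕ) : Set (Fin d × Fin d × Fin d → ℂ) :=
  {x | ∃ k ≤ (d - 3) / 2, x ∈ Cset d k} ∪ {stopD d}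

/-- U_d^even = (⋃_{k=0}^{(d−4)/2} C^{(d,d−2k)}) ∪ A^{(d,0)} ∪ {S_d} -/
def Ueven (d : ℕ) : Set (Fin d × Fin d × Fin d → ℂ) :=
  {x | ∃ k ≤ (d - 4) / 2, x ∈ Cset d k} ∪ A0set d ∪ {stopD d}

/-- the standard Hermitian inner product on ℂ^(Fin d × Fin d × Fin d) -/
def inpD (d : ℕ) (x y : Fin d × Fin d × Fin d → ℂ) : ℂ :=
  ∑ p, (starRingEnd ℂ) (x p) * y p

/-- Ẽ = I_d ⊗ E acting on ℂ^(Fin d × Fin d × Fin d) -/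
def ampBCD (d : ℕ) (E : Matrix (Fin d × Fin d) (Fin d × Fin d) ℂ) :
    Matrix (Fin d × Fin d × Fin d) (Fin d × Fin d × Fin d) ℂ :=
  fun p q => (if p.1 = q.1 then (1 : ℂ) else 0) * E p.2 q.2


section UPBaux

open Finset
open ComplexConjugate


lemma scalar_zero {a b x y : ℂ} (h : a * (x * b) = a * (y * b)) (hb : b ≠ 0) (hxy : x ≠ y) :
    a = 0 := by
  by_contra ha
  apply hxy
  have h1 : a * (x * b) = a * (y * b) := h
  have h2 : x * b = y * b := mul_left_cancel₀ ha h1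
  exact mul_right_cancel₀ hb h2

lemma all_or_all {S T : Finset ℕ} {F G : ℕ → ℂ}
    (h : ∀ x ∈ S, ∀ y ∈ T, F x = 0 ∨ G y = 0) :
    (∀ x ∈ S, F x = 0) ∨ (∀ y ∈ T, G y = 0) := by
  by_cases hF : ∀ x ∈ S, F x = 0
  · exact Or.inl hF
  · right
    push_neg at hF
    obtain ⟨x0, hx0, hFx0⟩ := hF
    intro y hy
    rcases h x0 hx0 y hy with h' | h'
    · exact absurd h' hFx0
    · exact h'

lemma conj_wN (m : ℕ) : conj (wN m) = (wN m)⁻¹ := by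
  unfold wN
  rw [← Complex.exp_conj, ← Complex.exp_neg]
  congr 1
  simp [map_div₀, Complex.conj_I, Complex.conj_ofReal, map_ofNat]
  ring

lemma rootsum (m : ℕ) (hm : 0 < m) (s t : ℕ) (hs : s < m) (ht : t < m) :
    ∑ j ∈ range m, (wN m) ^ (j * s) * (conj (wN m)) ^ (j * t) = if s = t then (m : ℂ) else 0 := by
  have hprim : IsPrimitiveRoot (wN m) m := Complex.isPrimitiveRoot_exp m (by omega)
  have hne : wN m ≠ 0 := hprim.ne_zero (by omega)
  have hterm : ∀ j, (wN m) ^ (j * s) * (conj (wN m)) ^ (j * t)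
      = ((wN m) ^ s * ((wN m) ^ t)⁻¹) ^ j := by
    intro j
    rw [conj_wN, mul_pow, pow_mul', pow_mul', inv_pow]
  rw [Finset.sum_congr rfl (fun j _ => hterm j)]
  by_cases hst : s = t
  · subst hst
    simp [mul_inv_cancel₀ (pow_ne_zero s hne)]
  · rw [if_neg hst]
    set x : ℂ := (wN m) ^ s * ((wN m) ^ t)⁻¹ with hx
    have hx1 : x ≠ 1 := by
      intro hcon
      apply hst
      apply hprim.pow_inj hs ht
      field_simp [hx] at hcon
      rw [hx] at hcon
      exact (mul_inv_eq_one₀ (pow_ne_zero t hne)).mp hcon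
    rw [geom_sum_eq hx1]
    have h1 : wN m ^ m = 1 := hprim.pow_eq_one
    have hxm : x ^ m = 1 := by
      rw [hx, mul_pow, ← pow_mul, mul_comm s m, pow_mul, h1, one_pow, ← inv_pow,
        ← pow_mul, mul_comm t m, pow_mul]
      rw [one_mul, inv_pow, h1]
      simp
    rw [hxm]
    simp

lemma dft_inv (m : ℕ) (hm : 0 < m) (p : ℕ → ℂ) (s : ℕ) (hs : s < m) :
    ∑ j ∈ range m, (wN m) ^ (j * s) * (∑ t ∈ range m, (conj (wN m)) ^ (j * t) * p t)
      = (m : ℂ) * p s := by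
  have e1 : ∀ j ∈ range m, (wN m) ^ (j * s) * (∑ t ∈ range m, (conj (wN m)) ^ (j * t) * p t)
      = ∑ t ∈ range m, ((wN m) ^ (j * s) * (conj (wN m)) ^ (j * t)) * p t := by
    intro j _
    rw [Finset.mul_sum]
    exact Finset.sum_congr rfl (fun t _ => by ring)
  rw [Finset.sum_congr rfl e1, Finset.sum_comm]
  have e2 : ∀ t ∈ range m, ∑ j ∈ range m, ((wN m) ^ (j * s) * (conj (wN m)) ^ (j * t)) * p t
      = (if s = t then (m : ℂ) else 0) * p t := by
    intro t htm
    rw [← Finset.sum_mul, rootsum m hm s t hs (mem_range.mp htm)]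
  rw [Finset.sum_congr rfl e2]
  simp only [ite_mul, zero_mul]
  rw [Finset.sum_ite_eq]
  simp [mem_range.mpr hs]

lemma keyDFT (m : ℕ) (hm : 0 < m) (p q : ℕ → ℂ) (β : ℂ)
    (H : ∀ i j : ℕ, i < m → j < m → ¬(i = 0 ∧ j = 0) →
      (∑ s ∈ range m, (conj (wN m)) ^ (j * s) * p s) * β *
      (∑ t ∈ range m, (conj (wN m)) ^ (i * t) * q t) = 0) :
    ∀ s t s' t', s < m → t < m → s' < m → t' < m →
      β * (p s * q t) = β * (p s' * q t') := by
  set P : ℕ → ℂ := fun j => ∑ s ∈ range m, (conj (wN m)) ^ (j * s) * p s with hP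
  set Q : ℕ → ℂ := fun i => ∑ t ∈ range m, (conj (wN m)) ^ (i * t) * q t with hQ
  have main : ∀ s t, s < m → t < m →
      ((m:ℂ) * p s) * β * ((m:ℂ) * q t) = P 0 * β * Q 0 := by
    intro s t hs ht
    have lhs_eq : ((m:ℂ) * p s) * β * ((m:ℂ) * q t)
        = ∑ j ∈ range m, ∑ i ∈ range m,
            ((wN m) ^ (j * s) * P j) * β * ((wN m) ^ (i * t) * Q i) := by
      rw [← dft_inv m hm p s hs, ← dft_inv m hm q t ht]
      rw [Finset.sum_mul, Finset.sum_mul]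
      exact Finset.sum_congr rfl (fun j _ => by rw [Finset.mul_sum])
    rw [lhs_eq]
    rw [Finset.sum_eq_single_of_mem 0 (mem_range.mpr hm)]
    · rw [Finset.sum_eq_single_of_mem 0 (mem_range.mpr hm)]
      · simp
      · intro i hi hi0
        have := H i 0 (mem_range.mp hi) hm (by tauto)
        have hPQ : P 0 * β * Q i = 0 := this
        calc ((wN m) ^ (0 * s) * P 0) * β * ((wN m) ^ (i * t) * Q i)
            = (wN m) ^ (0 * s) * (wN m) ^ (i * t) * (P 0 * β * Q i) := by ring
          _ = 0 := by rw [hPQ]; ring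
    · intro j hj hj0
      apply Finset.sum_eq_zero
      intro i _
      have hPQ : P j * β * Q i = 0 := H i j (by
        have := Finset.mem_range.mp ‹i ∈ range m›
        exact this) (mem_range.mp hj) (by tauto)
      calc ((wN m) ^ (j * s) * P j) * β * ((wN m) ^ (i * t) * Q i)
          = (wN m) ^ (j * s) * (wN m) ^ (i * t) * (P j * β * Q i) := by ring
        _ = 0 := by rw [hPQ]; ring
  intro s t s' t' hs ht hs' ht'
  have hm2 : ((m:ℂ) * (m:ℂ)) ≠ 0 := by
    have : (m:ℂ) ≠ 0 := Nat.cast_ne_zero.mpr (by omega)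
    exact mul_ne_zero this this
  apply mul_left_cancel₀ hm2
  calc (m:ℂ) * (m:ℂ) * (β * (p s * q t)) = ((m:ℂ) * p s) * β * ((m:ℂ) * q t) := by ring
    _ = P 0 * β * Q 0 := main s t hs ht
    _ = ((m:ℂ) * p s') * β * ((m:ℂ) * q t') := (main s' t' hs' ht').symm
    _ = (m:ℂ) * (m:ℂ) * (β * (p s' * q t')) := by ring

def zext (d : ℕ) (u : Fin d → ℂ) : ℕ → ℂ := fun t => if h : t < d then u ⟨t, h⟩ else 0

lemma zext_coe (d : ℕ) (u : Fin d → ℂ) (x : Fin d) : zext d u (x : ℕ) = u x := by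
  simp [zext]

lemma inp_factor (d : ℕ) (a b c u v w : Fin d → ℂ) :
    inpD d (tpv d a b c) (tpv d u v w) =
      (∑ x : Fin d, conj (a x) * u x) * (∑ x : Fin d, conj (b x) * v x) *
      (∑ x : Fin d, conj (c x) * w x) := by
  unfold inpD tpv
  trans ∑ x : Fin d, (conj (a x) * u x) *
      ((∑ y : Fin d, conj (b y) * v y) * (∑ z : Fin d, conj (c z) * w z))
  · rw [Fintype.sum_prod_type]
    apply Finset.sum_congr rfl
    intro x _
    trans ∑ y : Fin d, (conj (b y) * v y) *
        ((conj (a x) * u x) * (∑ z : Fin d, conj (c z) * w z))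
    · rw [Fintype.sum_prod_type]
      apply Finset.sum_congr rfl
      intro y _
      trans ∑ z : Fin d, (conj (c z) * w z) * ((conj (a x) * u x) * (conj (b y) * v y))
      · apply Finset.sum_congr rfl
        intro z _
        simp only [map_mul]
        ring
      · rw [← Finset.sum_mul]
        ring
    · rw [← Finset.sum_mul]
      ring
  · rw [← Finset.sum_mul]
    ring

lemma ip_eV (d t : ℕ) (u : Fin d → ℂ) :
    (∑ x : Fin d, conj (eV d t x) * u x) = zext d u t := by
  have e1 : ∀ x : Fin d, conj (eV d t x) * u x = if (x : ℕ) = t then u x else 0 := by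
    intro x
    unfold eV
    split <;> simp
  rw [Finset.sum_congr rfl (fun x _ => e1 x)]
  rcases lt_or_ge t d with hlt | hge
  · have : (∑ x : Fin d, if (x : ℕ) = t then u x else 0) = u ⟨t, hlt⟩ := by
      rw [Finset.sum_eq_single (⟨t, hlt⟩ : Fin d)]
      · simp
      · intro b _ hb
        rw [if_neg]
        intro hbt
        exact hb (Fin.ext hbt)
      · intro hmem
        exact absurd (Finset.mem_univ _) hmem
    rw [this]
    simp [zext, hlt]
  · rw [Finset.sum_eq_zero (fun x _ => by
      rw [if_neg (by have := x.isLt; omega)])]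
    simp [zext, show ¬ t < d by omega]

lemma ip_eta (d k i : ℕ) (u : Fin d → ℂ) (hk : 2 * k + 2 ≤ d) :
    (∑ x : Fin d, conj (etaG d k i x) * u x)
      = ∑ s ∈ range (d - 1 - 2 * k), (conj (wN (d - 1 - 2 * k))) ^ (i * s) * zext d u (k + s) := by
  unfold etaG
  have e1 : ∀ x : Fin d, conj (∑ t ∈ Finset.Icc k (d - 2 - k), wN (d - 1 - 2 * k) ^ (i * (t - k)) * eV d t x) * u x
      = ∑ t ∈ Finset.Icc k (d - 2 - k), (conj (wN (d - 1 - 2 * k))) ^ (i * (t - k)) * (conj (eV d t x) * u x) := by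
    intro x
    rw [map_sum, Finset.sum_mul]
    apply Finset.sum_congr rfl
    intro t _
    rw [map_mul, map_pow]
    ring
  rw [Finset.sum_congr rfl (fun x _ => e1 x), Finset.sum_comm]
  have e2 : ∀ t ∈ Finset.Icc k (d - 2 - k),
      (∑ x : Fin d, (conj (wN (d - 1 - 2 * k))) ^ (i * (t - k)) * (conj (eV d t x) * u x))
      = (conj (wN (d - 1 - 2 * k))) ^ (i * (t - k)) * zext d u t := by
    intro t _
    rw [← Finset.mul_sum, ip_eV]
  rw [Finset.sum_congr rfl e2]
  apply Finset.sum_nbij' (fun t => t - k) (fun s => k + s)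
  · intro t ht
    simp only [Finset.mem_Icc] at ht
    simp only [Finset.mem_range]
    omega
  · intro s hs
    simp only [Finset.mem_range] at hs
    simp only [Finset.mem_Icc]
    omega
  · intro t ht
    simp only [Finset.mem_Icc] at ht
    omega
  · intro s hs
    omega
  · intro t ht
    simp only [Finset.mem_Icc] at ht
    rw [show k + (t - k) = t by omega]

lemma ip_xi (d k j : ℕ) (u : Fin d → ℂ) (hk : 2 * k + 2 ≤ d) :
    (∑ x : Fin d, conj (xiG d k j x) * u x)
      = ∑ s ∈ range (d - 1 - 2 * k), (conj (wN (d - 1 - 2 * k))) ^ (j * s) * zext d u (k + 1 + s) := by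
  unfold xiG
  have e1 : ∀ x : Fin d, conj (∑ t ∈ Finset.Icc k (d - 2 - k), wN (d - 1 - 2 * k) ^ (j * (t - k)) * eV d (t + 1) x) * u x
      = ∑ t ∈ Finset.Icc k (d - 2 - k), (conj (wN (d - 1 - 2 * k))) ^ (j * (t - k)) * (conj (eV d (t + 1) x) * u x) := by
    intro x
    rw [map_sum, Finset.sum_mul]
    apply Finset.sum_congr rfl
    intro t _
    rw [map_mul, map_pow]
    ring
  rw [Finset.sum_congr rfl (fun x _ => e1 x), Finset.sum_comm]
  have e2 : ∀ t ∈ Finset.Icc k (d - 2 - k),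
      (∑ x : Fin d, (conj (wN (d - 1 - 2 * k))) ^ (j * (t - k)) * (conj (eV d (t + 1) x) * u x))
      = (conj (wN (d - 1 - 2 * k))) ^ (j * (t - k)) * zext d u (t + 1) := by
    intro t _
    rw [← Finset.mul_sum, ip_eV]
  rw [Finset.sum_congr rfl e2]
  apply Finset.sum_nbij' (fun t => t - k) (fun s => k + s)
  · intro t ht
    simp only [Finset.mem_Icc] at ht
    simp only [Finset.mem_range]
    omega
  · intro s hs
    simp only [Finset.mem_range] at hs
    simp only [Finset.mem_Icc]
    omega
  · intro t ht
    simp only [Finset.mem_Icc] at ht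
    omega
  · intro s hs
    omega
  · intro t ht
    simp only [Finset.mem_Icc] at ht
    rw [show k + 1 + (t - k) = t + 1 by omega]

lemma ip_ones (d : ℕ) (z : Fin d → ℂ) :
    (∑ x : Fin d, conj ((∑ i ∈ range d, eV d i x)) * z x) = ∑ t ∈ range d, zext d z t := by
  have e1 : ∀ x : Fin d, conj ((∑ i ∈ range d, eV d i x)) * z x
      = ∑ i ∈ range d, conj (eV d i x) * z x := by
    intro x
    rw [map_sum, Finset.sum_mul]
  rw [Finset.sum_congr rfl (fun x _ => e1 x), Finset.sum_comm]
  exact Finset.sum_congr rfl (fun i _ => ip_eV d i z)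

lemma scalar_zero' {a b x y : ℂ} (h : a * (x * b) = a * (y * b)) (hb : b ≠ 0) (hxy : x ≠ y) :
    a = 0 := by
  by_contra ha
  exact hxy (mul_right_cancel₀ hb (mul_left_cancel₀ ha h))

lemma all_or_all' {S T : Finset ℕ} {F G : ℕ → ℂ}
    (h : ∀ x ∈ S, ∀ y ∈ T, F x = 0 ∨ G y = 0) :
    (∀ x ∈ S, F x = 0) ∨ (∀ y ∈ T, G y = 0) := by
  by_cases hF : ∀ x ∈ S, F x = 0
  · exact Or.inl hF
  · right
    push_neg at hF
    obtain ⟨x0, hx0, hFx0⟩ := hF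
    intro y hy
    rcases h x0 hx0 y hy with h' | h'
    · exact absurd h' hFx0
    · exact h'

def RRs (n k : ℕ) : Finset ℕ := Finset.Icc (k+1) (2*n-k)
def LLs (n k : ℕ) : Finset ℕ := Finset.Icc k (2*n-1-k)
def WWs (n k : ℕ) : Finset ℕ := Finset.Icc k (2*n-k)

def TCc (n k : ℕ) (c : ℂ) (F G : ℕ → ℂ) : Prop :=
  ∀ x ∈ RRs n k, ∀ y ∈ LLs n k, ∀ x' ∈ RRs n k, ∀ y' ∈ LLs n k,
    c * (F x * G y) = c * (F x' * G y')

def C6 (n k : ℕ) (f g h : ℕ → ℂ) : Prop :=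
  TCc n k (g k) f h ∧ TCc n k (h (2*n-k)) f g ∧ TCc n k (f (2*n-k)) g h ∧
  TCc n k (g (2*n-k)) h f ∧ TCc n k (h k) g f ∧ TCc n k (f k) h g

lemma C6.cyc {n k : ℕ} {f g h : ℕ → ℂ} (hc : C6 n k f g h) : C6 n k g h f :=
  ⟨hc.2.2.2.2.1, hc.2.2.1, hc.2.2.2.1, hc.2.1, hc.2.2.2.2.2, hc.1⟩

def ZeroOn (n k : ℕ) (F : ℕ → ℂ) : Prop := ∀ x ∈ WWs n k, F x = 0

def isOn (n k : ℕ) (F : ℕ → ℂ) (S : Finset ℕ) (c : ℂ) : Prop :=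
  ∀ x ∈ WWs n k, F x = if x ∈ S then c else 0

lemma isOn_of_pieces {n k : ℕ} {S : Finset ℕ} {c : ℂ} {F : ℕ → ℂ}
    (h1 : ∀ x ∈ WWs n k, x ∈ S → F x = c) (h2 : ∀ x ∈ WWs n k, x ∉ S → F x = 0) :
    isOn n k F S c := by
  intro x hx
  by_cases hxs : x ∈ S
  · simp [hxs, h1 x hx hxs]
  · simp [hxs, h2 x hx hxs]

-- membership facts
lemma mem_RR {n k x : ℕ} : x ∈ RRs n k ↔ k + 1 ≤ x ∧ x ≤ 2*n - k := by
  simp [RRs, Finset.mem_Icc]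
lemma mem_LL {n k x : ℕ} : x ∈ LLs n k ↔ k ≤ x ∧ x ≤ 2*n - 1 - k := by
  simp [LLs, Finset.mem_Icc]
lemma mem_WW {n k x : ℕ} : x ∈ WWs n k ↔ k ≤ x ∧ x ≤ 2*n - k := by
  simp [WWs, Finset.mem_Icc]

lemma TC_kill {n k : ℕ} (hk : k+1 ≤ n) {c : ℂ} {F G : ℕ → ℂ} (hTC : TCc n k c F G)
    (hG0 : G (k+1) = 0) : ∀ x ∈ RRs n k, c * (F x * G k) = 0 := by
  intro x hx
  have h1 := hTC x hx k (mem_LL.mpr (by omega)) x hx (k+1) (mem_LL.mpr (by omega))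
  rw [hG0, mul_zero, mul_zero] at h1
  exact h1

lemma TC_killR {n k : ℕ} (hk : k+1 ≤ n) {c : ℂ} {F G : ℕ → ℂ} (hTC : TCc n k c F G)
    (hF0 : F (k+1) = 0) : ∀ y ∈ LLs n k, c * (F (2*n-k) * G y) = 0 := by
  intro y hy
  have h1 := hTC (2*n-k) (mem_RR.mpr (by omega)) y hy (k+1) (mem_RR.mpr (by omega)) y hy
  rw [hF0, zero_mul, mul_zero] at h1
  exact h1

lemma bkill {n k : ℕ} (hk : k+2 ≤ n) {f g h : ℕ → ℂ} (hC : C6 n k f g h)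
    (hf1 : ∃ x ∈ WWs n (k+1), f x ≠ 0) (hf2 : ∃ x ∈ WWs n (k+1), ∃ y ∈ WWs n (k+1), f x ≠ f y)
    (hg1 : ∃ x ∈ WWs n (k+1), g x ≠ 0) (hg2 : ∃ x ∈ WWs n (k+1), ∃ y ∈ WWs n (k+1), g x ≠ g y)
    (hh1 : ∃ x ∈ WWs n (k+1), h x ≠ 0) (hh2 : ∃ x ∈ WWs n (k+1), ∃ y ∈ WWs n (k+1), h x ≠ h y) :
    f k = 0 ∧ f (2*n-k) = 0 ∧ g k = 0 ∧ g (2*n-k) = 0 ∧ h k = 0 ∧ h (2*n-k) = 0 := by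
  obtain ⟨c1, c2, c3, c4, c5, c6⟩ := hC
  have hR : ∀ x, x ∈ WWs n (k+1) → x ∈ RRs n k := by
    intro x hx; rw [mem_WW] at hx; exact mem_RR.mpr (by omega)
  have hL : ∀ x, x ∈ WWs n (k+1) → x ∈ LLs n k := by
    intro x hx; rw [mem_WW] at hx; exact mem_LL.mpr (by omega)
  obtain ⟨xf, hxf, yf, hyf, hfxy⟩ := hf2
  obtain ⟨xg, hxg, yg, hyg, hgxy⟩ := hg2
  obtain ⟨xh, hxh, yh, hyh, hhxy⟩ := hh2
  obtain ⟨zf, hzf, hzf0⟩ := hf1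
  obtain ⟨zg, hzg, hzg0⟩ := hg1
  obtain ⟨zh, hzh, hzh0⟩ := hh1
  refine ⟨?_, ?_, ?_, ?_, ?_, ?_⟩
  · -- f k = 0 from c6 : TCc (f k) h g ; h nonconst on RR, g nonzero on LL
    exact scalar_zero' (c6 xh (hR _ hxh) zg (hL _ hzg) yh (hR _ hyh) zg (hL _ hzg)) hzg0 hhxy
  · -- f (2n-k) = 0 from c3 : TCc (f (2n-k)) g h
    exact scalar_zero' (c3 xg (hR _ hxg) zh (hL _ hzh) yg (hR _ hyg) zh (hL _ hzh)) hzh0 hgxy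
  · -- g k = 0 from c1 : TCc (g k) f h
    exact scalar_zero' (c1 xf (hR _ hxf) zh (hL _ hzh) yf (hR _ hyf) zh (hL _ hzh)) hzh0 hfxy
  · -- g (2n-k) = 0 from c4 : TCc (g (2n-k)) h f
    exact scalar_zero' (c4 xh (hR _ hxh) zf (hL _ hzf) yh (hR _ hyh) zf (hL _ hzf)) hzf0 hhxy
  · -- h k = 0 from c5 : TCc (h k) g f
    exact scalar_zero' (c5 xg (hR _ hxg) zf (hL _ hzf) yg (hR _ hyg) zf (hL _ hzf)) hzf0 hgxy
  · -- h (2n-k) = 0 from c2 : TCc (h (2n-k)) f g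
    exact scalar_zero' (c2 xf (hR _ hxf) zg (hL _ hzg) yf (hR _ hyf) zg (hL _ hzg)) hzg0 hfxy

lemma step1 {n k : ℕ} (hk : k+1 ≤ n) {f g h : ℕ → ℂ} (hC : C6 n k f g h) {a b c : ℂ}
    (ha : a ≠ 0) (hb : b ≠ 0) (hc : c ≠ 0)
    (hf : ∀ x ∈ Finset.Icc (k+1) (2*n-1-k), f x = a)
    (hg : ∀ x ∈ Finset.Icc (k+1) (2*n-1-k), g x = b)
    (hh : ∀ x ∈ Finset.Icc (k+1) (2*n-1-k), h x = c) :
    (f k = a ∧ f (2*n-k) = a ∧ g k = b ∧ g (2*n-k) = b ∧ h k = c ∧ h (2*n-k) = c) ∨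
    (f k = 0 ∧ f (2*n-k) = 0 ∧ g k = 0 ∧ g (2*n-k) = 0 ∧ h k = 0 ∧ h (2*n-k) = 0) := by
  obtain ⟨c1, c2, c3, c4, c5, c6⟩ := hC
  have hiI : k+1 ∈ Finset.Icc (k+1) (2*n-1-k) := by simp [Finset.mem_Icc]; omega
  have hiR : k+1 ∈ RRs n k := mem_RR.mpr (by omega)
  have hiL : k+1 ∈ LLs n k := mem_LL.mpr (by omega)
  have hkL : k ∈ LLs n k := mem_LL.mpr (by omega)
  have h2R : 2*n-k ∈ RRs n k := mem_RR.mpr (by omega)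
  have hfi : f (k+1) = a := hf _ hiI
  have hgi : g (k+1) = b := hg _ hiI
  have hhi : h (k+1) = c := hh _ hiI
  -- e1 : g k * f (2n-k) = g k * a
  have e1 : g k * f (2*n-k) = g k * a := by
    have t := c1 (2*n-k) h2R (k+1) hiL (k+1) hiR (k+1) hiL
    rw [hfi, hhi] at t
    exact mul_right_cancel₀ hc (by linear_combination t)
  have e3 : h (2*n-k) * f (2*n-k) = h (2*n-k) * a := by
    have t := c2 (2*n-k) h2R (k+1) hiL (k+1) hiR (k+1) hiL
    rw [hfi, hgi] at t
    exact mul_right_cancel₀ hb (by linear_combination t)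
  have e4 : h (2*n-k) * g k = h (2*n-k) * b := by
    have t := c2 (k+1) hiR k hkL (k+1) hiR (k+1) hiL
    rw [hfi, hgi] at t
    exact mul_right_cancel₀ ha (by linear_combination t)
  have e5 : f (2*n-k) * g (2*n-k) = f (2*n-k) * b := by
    have t := c3 (2*n-k) h2R (k+1) hiL (k+1) hiR (k+1) hiL
    rw [hgi, hhi] at t
    exact mul_right_cancel₀ hc (by linear_combination t)
  have e6 : f (2*n-k) * h k = f (2*n-k) * c := by
    have t := c3 (k+1) hiR k hkL (k+1) hiR (k+1) hiL
    rw [hgi, hhi] at t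
    exact mul_right_cancel₀ hb (by linear_combination t)
  have e7 : g (2*n-k) * h (2*n-k) = g (2*n-k) * c := by
    have t := c4 (2*n-k) h2R (k+1) hiL (k+1) hiR (k+1) hiL
    rw [hfi, hhi] at t
    exact mul_right_cancel₀ ha (by linear_combination t)
  have e8 : g (2*n-k) * f k = g (2*n-k) * a := by
    have t := c4 (k+1) hiR k hkL (k+1) hiR (k+1) hiL
    rw [hfi, hhi] at t
    exact mul_right_cancel₀ hc (by linear_combination t)
  have e9 : h k * g (2*n-k) = h k * b := by
    have t := c5 (2*n-k) h2R (k+1) hiL (k+1) hiR (k+1) hiL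
    rw [hfi, hgi] at t
    exact mul_right_cancel₀ ha (by linear_combination t)
  have e10 : h k * f k = h k * a := by
    have t := c5 (k+1) hiR k hkL (k+1) hiR (k+1) hiL
    rw [hfi, hgi] at t
    exact mul_right_cancel₀ hb (by linear_combination t)
  have e11 : f k * h (2*n-k) = f k * c := by
    have t := c6 (2*n-k) h2R (k+1) hiL (k+1) hiR (k+1) hiL
    rw [hgi, hhi] at t
    exact mul_right_cancel₀ hb (by linear_combination t)
  have e12 : f k * g k = f k * b := by
    have t := c6 (k+1) hiR k hkL (k+1) hiR (k+1) hiL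
    rw [hgi, hhi] at t
    exact mul_right_cancel₀ hc (by linear_combination t)
  by_cases hα : f k = 0
  · right
    have hγ : h k = 0 := by
      have : h k * a = 0 := by rw [← e10, hα, mul_zero]
      rcases mul_eq_zero.mp this with h' | h'
      · exact h'
      · exact absurd h' ha
    have hβ' : g (2*n-k) = 0 := by
      have : g (2*n-k) * a = 0 := by rw [← e8, hα, mul_zero]
      rcases mul_eq_zero.mp this with h' | h'
      · exact h'
      · exact absurd h' ha
    have hα' : f (2*n-k) = 0 := by
      have : f (2*n-k) * b = 0 := by rw [← e5, hβ', mul_zero]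
      rcases mul_eq_zero.mp this with h' | h'
      · exact h'
      · exact absurd h' hb
    have hβ : g k = 0 := by
      have : g k * a = 0 := by rw [← e1, hα', mul_zero]
      rcases mul_eq_zero.mp this with h' | h'
      · exact h'
      · exact absurd h' ha
    have hγ' : h (2*n-k) = 0 := by
      have : h (2*n-k) * b = 0 := by rw [← e4, hβ, mul_zero]
      rcases mul_eq_zero.mp this with h' | h'
      · exact h'
      · exact absurd h' hb
    exact ⟨hα, hα', hβ, hβ', hγ, hγ'⟩
  · left
    have hγ' : h (2*n-k) = c := mul_left_cancel₀ hα e11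
    have hβ : g k = b := mul_left_cancel₀ hα e12
    have hγ'0 : h (2*n-k) ≠ 0 := by rw [hγ']; exact hc
    have hα' : f (2*n-k) = a := mul_left_cancel₀ hγ'0 e3
    have hα'0 : f (2*n-k) ≠ 0 := by rw [hα']; exact ha
    have hβ' : g (2*n-k) = b := mul_left_cancel₀ hα'0 e5
    have hγ : h k = c := mul_left_cancel₀ hα'0 e6
    have hγ0 : h k ≠ 0 := by rw [hγ]; exact hc
    have hα2 : f k = a := mul_left_cancel₀ hγ0 e10
    exact ⟨hα2, hα', hβ, hβ', hγ, hγ'⟩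

lemma step0 {n k : ℕ} (hk : k+1 ≤ n) {f g h : ℕ → ℂ} (hC : C6 n k f g h)
    (hh0 : ∀ x ∈ Finset.Icc (k+1) (2*n-1-k), h x = 0) :
    ZeroOn n k f ∨ ZeroOn n k g ∨ ZeroOn n k h ∨
    (∃ A B C, A ≠ 0 ∧ B ≠ 0 ∧ C ≠ 0 ∧
      isOn n k f (LLs n k) A ∧ isOn n k g (RRs n k) B ∧ isOn n k h {k} C) ∨
    (∃ A B C, A ≠ 0 ∧ B ≠ 0 ∧ C ≠ 0 ∧
      isOn n k f (RRs n k) A ∧ isOn n k g (LLs n k) B ∧ isOn n k h {2*n-k} C) ∨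
    (∃ A B C, A ≠ 0 ∧ B ≠ 0 ∧ C ≠ 0 ∧
      isOn n k f {k} A ∧ isOn n k g {k} B ∧ isOn n k h {k} C) ∨
    (∃ A B C, A ≠ 0 ∧ B ≠ 0 ∧ C ≠ 0 ∧
      isOn n k f {2*n-k} A ∧ isOn n k g {2*n-k} B ∧ isOn n k h {2*n-k} C) := by
  obtain ⟨c1, c2, c3, c4, c5, c6⟩ := hC
  have hiR : k+1 ∈ RRs n k := mem_RR.mpr (by omega)
  have hiL : k+1 ∈ LLs n k := mem_LL.mpr (by omega)
  have hkL : k ∈ LLs n k := mem_LL.mpr (by omega)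
  have h2R : 2*n-k ∈ RRs n k := mem_RR.mpr (by omega)
  have hhi : h (k+1) = 0 := hh0 _ (by simp [Finset.mem_Icc]; omega)
  have E1 : ∀ x ∈ RRs n k, g k * (f x * h k) = 0 := TC_kill hk c1 hhi
  have E3 : ∀ x ∈ RRs n k, f (2*n-k) * (g x * h k) = 0 := TC_kill hk c3 hhi
  have E4 : ∀ y ∈ LLs n k, g (2*n-k) * (h (2*n-k) * f y) = 0 := TC_killR hk c4 hhi
  have E6 : ∀ y ∈ LLs n k, f k * (h (2*n-k) * g y) = 0 := TC_killR hk c6 hhi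
  have hhW : ∀ x ∈ WWs n k, x ≠ k → x ≠ 2*n-k → h x = 0 := by
    intro x hx h1 h2
    rw [mem_WW] at hx
    exact hh0 x (by simp [Finset.mem_Icc]; omega)
  by_cases hγ : h k = 0
  · by_cases hγ' : h (2*n-k) = 0
    · -- h ≡ 0 on W
      refine Or.inr (Or.inr (Or.inl ?_))
      intro x hx
      by_cases h1 : x = k
      · rw [h1]; exact hγ
      · by_cases h2 : x = 2*n-k
        · rw [h2]; exact hγ'
        · exact hhW x hx h1 h2
    · -- γ = 0, γ' ≠ 0
      by_cases hex : ∃ x ∈ RRs n k, ∃ y ∈ LLs n k, f x ≠ 0 ∧ g y ≠ 0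
      · obtain ⟨x1, hx1, y1, hy1, hfx1, hgy1⟩ := hex
        have hfR : ∀ x ∈ RRs n k, f x = f x1 := by
          intro x hx
          have t := c2 x hx y1 hy1 x1 hx1 y1 hy1
          exact mul_right_cancel₀ hgy1 (by linear_combination mul_left_cancel₀ hγ' t)
        have hgL : ∀ y ∈ LLs n k, g y = g y1 := by
          intro y hy
          have t := c2 x1 hx1 y hy x1 hx1 y1 hy1
          exact mul_left_cancel₀ hfx1 (mul_left_cancel₀ hγ' t)
        have hg2 : g (2*n-k) = 0 := by
          have t := E4 (k+1) hiL
          rw [hfR (k+1) hiR] at t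
          rcases mul_eq_zero.mp t with h' | h'
          · exact h'
          · rcases mul_eq_zero.mp h' with h'' | h''
            · exact absurd h'' hγ'
            · exact absurd h'' hfx1
        have hfk : f k = 0 := by
          have t := E6 (k+1) hiL
          rw [hgL (k+1) hiL] at t
          rcases mul_eq_zero.mp t with h' | h'
          · exact h'
          · rcases mul_eq_zero.mp h' with h'' | h''
            · exact absurd h'' hγ'
            · exact absurd h'' hgy1
        refine Or.inr (Or.inr (Or.inr (Or.inr (Or.inl
          ⟨f x1, g y1, h (2*n-k), hfx1, hgy1, hγ', ?_, ?_, ?_⟩))))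
        · apply isOn_of_pieces
          · intro x _ hxS
            exact hfR x hxS
          · intro x hx hxS
            rw [mem_WW] at hx
            rw [mem_RR] at hxS
            have : x = k := by omega
            rw [this]; exact hfk
        · apply isOn_of_pieces
          · intro x _ hxS
            exact hgL x hxS
          · intro x hx hxS
            rw [mem_WW] at hx
            rw [mem_LL] at hxS
            have : x = 2*n-k := by omega
            rw [this]; exact hg2
        · apply isOn_of_pieces
          · intro x _ hxS
            rw [Finset.mem_singleton] at hxS
            rw [hxS]
          · intro x hx hxS
            rw [Finset.mem_singleton] at hxS
            by_cases h1 : x = k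
            · rw [h1]; exact hγ
            · exact hhW x hx h1 hxS
      · have hd : (∀ x ∈ RRs n k, f x = 0) ∨ (∀ y ∈ LLs n k, g y = 0) := by
          apply all_or_all'
          intro x hx y hy
          by_cases hfx : f x = 0
          · exact Or.inl hfx
          · by_cases hgy : g y = 0
            · exact Or.inr hgy
            · exact absurd ⟨x, hx, y, hy, hfx, hgy⟩ hex
        rcases hd with hfR0 | hgL0
        · -- f | RR = 0
          by_cases hfk : f k = 0
          · refine Or.inl ?_
            intro x hx
            by_cases h1 : x = k
            · rw [h1]; exact hfk
            · exact hfR0 x (by rw [mem_WW] at hx; exact mem_RR.mpr (by omega))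
          · have hgL0 : ∀ y ∈ LLs n k, g y = 0 := by
              intro y hy
              have t := E6 y hy
              rcases mul_eq_zero.mp t with h' | h'
              · exact absurd h' hfk
              · rcases mul_eq_zero.mp h' with h'' | h''
                · exact absurd h'' hγ'
                · exact h''
            have hg2 : g (2*n-k) = 0 := by
              have t := E4 k hkL
              rcases mul_eq_zero.mp t with h' | h'
              · exact h'
              · rcases mul_eq_zero.mp h' with h'' | h''
                · exact absurd h'' hγ'
                · exact absurd h'' hfk
            refine Or.inr (Or.inl ?_)
            intro x hx
            by_cases h1 : x = 2*n-k
            · rw [h1]; exact hg2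
            · exact hgL0 x (by rw [mem_WW] at hx; exact mem_LL.mpr (by omega))
        · -- g | LL = 0
          by_cases hg2 : g (2*n-k) = 0
          · refine Or.inr (Or.inl ?_)
            intro x hx
            by_cases h1 : x = 2*n-k
            · rw [h1]; exact hg2
            · exact hgL0 x (by rw [mem_WW] at hx; exact mem_LL.mpr (by omega))
          · have hfL0 : ∀ y ∈ LLs n k, f y = 0 := by
              intro y hy
              have t := E4 y hy
              rcases mul_eq_zero.mp t with h' | h'
              · exact absurd h' hg2
              · rcases mul_eq_zero.mp h' with h'' | h''
                · exact absurd h'' hγ'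
                · exact h''
            by_cases hf2 : f (2*n-k) = 0
            · refine Or.inl ?_
              intro x hx
              by_cases h1 : x = 2*n-k
              · rw [h1]; exact hf2
              · exact hfL0 x (by rw [mem_WW] at hx; exact mem_LL.mpr (by omega))
            · refine Or.inr (Or.inr (Or.inr (Or.inr (Or.inr (Or.inr
                ⟨f (2*n-k), g (2*n-k), h (2*n-k), hf2, hg2, hγ', ?_, ?_, ?_⟩)))))
              · apply isOn_of_pieces
                · intro x _ hxS
                  rw [Finset.mem_singleton] at hxS
                  rw [hxS]
                · intro x hx hxS
                  rw [Finset.mem_singleton] at hxS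
                  exact hfL0 x (by rw [mem_WW] at hx; exact mem_LL.mpr (by omega))
              · apply isOn_of_pieces
                · intro x _ hxS
                  rw [Finset.mem_singleton] at hxS
                  rw [hxS]
                · intro x hx hxS
                  rw [Finset.mem_singleton] at hxS
                  exact hgL0 x (by rw [mem_WW] at hx; exact mem_LL.mpr (by omega))
              · apply isOn_of_pieces
                · intro x _ hxS
                  rw [Finset.mem_singleton] at hxS
                  rw [hxS]
                · intro x hx hxS
                  rw [Finset.mem_singleton] at hxS
                  by_cases h1 : x = k
                  · rw [h1]; exact hγ
                  · exact hhW x hx h1 hxS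
  · by_cases hγ' : h (2*n-k) = 0
    · -- γ ≠ 0, γ' = 0
      by_cases hex : ∃ x ∈ RRs n k, ∃ y ∈ LLs n k, g x ≠ 0 ∧ f y ≠ 0
      · obtain ⟨x1, hx1, y1, hy1, hgx1, hfy1⟩ := hex
        have hfL : ∀ y ∈ LLs n k, f y = f y1 := by
          intro y hy
          have t := c5 x1 hx1 y hy x1 hx1 y1 hy1
          exact mul_left_cancel₀ hgx1 (mul_left_cancel₀ hγ t)
        have hgR : ∀ x ∈ RRs n k, g x = g x1 := by
          intro x hx
          have t := c5 x hx y1 hy1 x1 hx1 y1 hy1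
          exact mul_right_cancel₀ hfy1 (by linear_combination mul_left_cancel₀ hγ t)
        have hgk : g k = 0 := by
          have t := E1 (k+1) hiR
          rw [hfL (k+1) hiL] at t
          rcases mul_eq_zero.mp t with h' | h'
          · exact h'
          · rcases mul_eq_zero.mp h' with h'' | h''
            · exact absurd h'' hfy1
            · exact absurd h'' hγ
        have hf2 : f (2*n-k) = 0 := by
          have t := E3 (k+1) hiR
          rw [hgR (k+1) hiR] at t
          rcases mul_eq_zero.mp t with h' | h'
          · exact h'
          · rcases mul_eq_zero.mp h' with h'' | h''
            · exact absurd h'' hgx1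
            · exact absurd h'' hγ
        refine Or.inr (Or.inr (Or.inr (Or.inl
          ⟨f y1, g x1, h k, hfy1, hgx1, hγ, ?_, ?_, ?_⟩)))
        · apply isOn_of_pieces
          · intro x _ hxS
            exact hfL x hxS
          · intro x hx hxS
            rw [mem_WW] at hx
            rw [mem_LL] at hxS
            have : x = 2*n-k := by omega
            rw [this]; exact hf2
        · apply isOn_of_pieces
          · intro x _ hxS
            exact hgR x hxS
          · intro x hx hxS
            rw [mem_WW] at hx
            rw [mem_RR] at hxS
            have : x = k := by omega
            rw [this]; exact hgk
        · apply isOn_of_pieces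
          · intro x _ hxS
            rw [Finset.mem_singleton] at hxS
            rw [hxS]
          · intro x hx hxS
            rw [Finset.mem_singleton] at hxS
            by_cases h2 : x = 2*n-k
            · rw [h2]; exact hγ'
            · exact hhW x hx hxS h2
      · have hd : (∀ x ∈ RRs n k, g x = 0) ∨ (∀ y ∈ LLs n k, f y = 0) := by
          apply all_or_all'
          intro x hx y hy
          by_cases hgx : g x = 0
          · exact Or.inl hgx
          · by_cases hfy : f y = 0
            · exact Or.inr hfy
            · exact absurd ⟨x, hx, y, hy, hgx, hfy⟩ hex
        rcases hd with hgR0 | hfL0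
        · by_cases hgk : g k = 0
          · refine Or.inr (Or.inl ?_)
            intro x hx
            by_cases h1 : x = k
            · rw [h1]; exact hgk
            · exact hgR0 x (by rw [mem_WW] at hx; exact mem_RR.mpr (by omega))
          · have hfR0 : ∀ x ∈ RRs n k, f x = 0 := by
              intro x hx
              have t := E1 x hx
              rcases mul_eq_zero.mp t with h' | h'
              · exact absurd h' hgk
              · rcases mul_eq_zero.mp h' with h'' | h''
                · exact h''
                · exact absurd h'' hγ
            by_cases hfk : f k = 0
            · refine Or.inl ?_
              intro x hx
              by_cases h1 : x = k
              · rw [h1]; exact hfk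
              · exact hfR0 x (by rw [mem_WW] at hx; exact mem_RR.mpr (by omega))
            · refine Or.inr (Or.inr (Or.inr (Or.inr (Or.inr (Or.inl
                ⟨f k, g k, h k, hfk, hgk, hγ, ?_, ?_, ?_⟩)))))
              · apply isOn_of_pieces
                · intro x _ hxS
                  rw [Finset.mem_singleton] at hxS
                  rw [hxS]
                · intro x hx hxS
                  rw [Finset.mem_singleton] at hxS
                  exact hfR0 x (by rw [mem_WW] at hx; exact mem_RR.mpr (by omega))
              · apply isOn_of_pieces
                · intro x _ hxS
                  rw [Finset.mem_singleton] at hxS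
                  rw [hxS]
                · intro x hx hxS
                  rw [Finset.mem_singleton] at hxS
                  exact hgR0 x (by rw [mem_WW] at hx; exact mem_RR.mpr (by omega))
              · apply isOn_of_pieces
                · intro x _ hxS
                  rw [Finset.mem_singleton] at hxS
                  rw [hxS]
                · intro x hx hxS
                  rw [Finset.mem_singleton] at hxS
                  by_cases h2 : x = 2*n-k
                  · rw [h2]; exact hγ'
                  · exact hhW x hx hxS h2
        · by_cases hf2 : f (2*n-k) = 0
          · refine Or.inl ?_
            intro x hx
            by_cases h1 : x = 2*n-k
            · rw [h1]; exact hf2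
            · exact hfL0 x (by rw [mem_WW] at hx; exact mem_LL.mpr (by omega))
          · have hgR0 : ∀ x ∈ RRs n k, g x = 0 := by
              intro x hx
              have t := E3 x hx
              rcases mul_eq_zero.mp t with h' | h'
              · exact absurd h' hf2
              · rcases mul_eq_zero.mp h' with h'' | h''
                · exact h''
                · exact absurd h'' hγ
            have hgk : g k = 0 := by
              have t := E1 (2*n-k) h2R
              rcases mul_eq_zero.mp t with h' | h'
              · exact h'
              · rcases mul_eq_zero.mp h' with h'' | h''
                · exact absurd h'' hf2
                · exact absurd h'' hγ
            refine Or.inr (Or.inl ?_)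
            intro x hx
            by_cases h1 : x = k
            · rw [h1]; exact hgk
            · exact hgR0 x (by rw [mem_WW] at hx; exact mem_RR.mpr (by omega))
    · -- γ ≠ 0, γ' ≠ 0
      by_cases hex : ∃ x ∈ RRs n k, ∃ y ∈ LLs n k, g x ≠ 0 ∧ f y ≠ 0
      · exfalso
        obtain ⟨x1, hx1, y1, hy1, hgx1, hfy1⟩ := hex
        have hfL : ∀ y ∈ LLs n k, f y = f y1 := by
          intro y hy
          have t := c5 x1 hx1 y hy x1 hx1 y1 hy1
          exact mul_left_cancel₀ hgx1 (mul_left_cancel₀ hγ t)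
        have hgk : g k = 0 := by
          have t := E1 (k+1) hiR
          rw [hfL (k+1) hiL] at t
          rcases mul_eq_zero.mp t with h' | h'
          · exact h'
          · rcases mul_eq_zero.mp h' with h'' | h''
            · exact absurd h'' hfy1
            · exact absurd h'' hγ
        have hgL : ∀ y ∈ LLs n k, g y = g y1 := by
          intro y hy
          have t := c2 (k+1) hiR y hy (k+1) hiR y1 hy1
          rw [hfL (k+1) hiL] at t
          exact mul_left_cancel₀ hfy1 (mul_left_cancel₀ hγ' (by linear_combination t))
        have hgy1 : g y1 = 0 := by rw [← hgL k hkL]; exact hgk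
        -- now g ≡ 0 on LL; but also g x1 ≠ 0 where x1 ∈ RR. Use c5 to relate:
        -- c5 : h k * (g x * f y) const; (x1, y1) vs (x, y1) gives g const on RR
        have hgR : ∀ x ∈ RRs n k, g x = g x1 := by
          intro x hx
          have t := c5 x hx y1 hy1 x1 hx1 y1 hy1
          exact mul_right_cancel₀ hfy1 (by linear_combination mul_left_cancel₀ hγ t)
        -- g (k+1) : in RR ∩ LL
        have h1 : g (k+1) = g x1 := hgR (k+1) hiR
        have h2 : g (k+1) = 0 := by rw [hgL (k+1) hiL]; exact hgy1
        rw [h2] at h1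
        exact hgx1 h1.symm
      · have hd : (∀ x ∈ RRs n k, g x = 0) ∨ (∀ y ∈ LLs n k, f y = 0) := by
          apply all_or_all'
          intro x hx y hy
          by_cases hgx : g x = 0
          · exact Or.inl hgx
          · by_cases hfy : f y = 0
            · exact Or.inr hfy
            · exact absurd ⟨x, hx, y, hy, hgx, hfy⟩ hex
        rcases hd with hgR0 | hfL0
        · by_cases hgk : g k = 0
          · refine Or.inr (Or.inl ?_)
            intro x hx
            by_cases h1 : x = k
            · rw [h1]; exact hgk
            · exact hgR0 x (by rw [mem_WW] at hx; exact mem_RR.mpr (by omega))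
          · have hfR0 : ∀ x ∈ RRs n k, f x = 0 := by
              intro x hx
              have t := c2 x hx k hkL x hx (k+1) hiL
              rw [hgR0 (k+1) (mem_RR.mpr (by omega)), mul_zero, mul_zero] at t
              rcases mul_eq_zero.mp t with h' | h'
              · exact absurd h' hγ'
              · rcases mul_eq_zero.mp h' with h'' | h''
                · exact h''
                · exact absurd h'' hgk
            have hfk : f k = 0 := by
              have t := E6 k hkL
              rcases mul_eq_zero.mp t with h' | h'
              · exact h'
              · rcases mul_eq_zero.mp h' with h'' | h''
                · exact absurd h'' hγ'
                · exact absurd h'' hgk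
            refine Or.inl ?_
            intro x hx
            by_cases h1 : x = k
            · rw [h1]; exact hfk
            · exact hfR0 x (by rw [mem_WW] at hx; exact mem_RR.mpr (by omega))
        · by_cases hf2 : f (2*n-k) = 0
          · refine Or.inl ?_
            intro x hx
            by_cases h1 : x = 2*n-k
            · rw [h1]; exact hf2
            · exact hfL0 x (by rw [mem_WW] at hx; exact mem_LL.mpr (by omega))
          · have hgL0 : ∀ y ∈ LLs n k, g y = 0 := by
              intro y hy
              have t := c2 (2*n-k) h2R y hy (k+1) hiR y hy
              rw [hfL0 (k+1) hiL, zero_mul, mul_zero] at t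
              rcases mul_eq_zero.mp t with h' | h'
              · exact absurd h' hγ'
              · rcases mul_eq_zero.mp h' with h'' | h''
                · exact absurd h'' hf2
                · exact h''
            have hg2 : g (2*n-k) = 0 := by
              have t := E3 (2*n-k) h2R
              rcases mul_eq_zero.mp t with h' | h'
              · exact absurd h' hf2
              · rcases mul_eq_zero.mp h' with h'' | h''
                · exact h''
                · exact absurd h'' hγ
            refine Or.inr (Or.inl ?_)
            intro x hx
            by_cases h1 : x = 2*n-k
            · rw [h1]; exact hg2
            · exact hgL0 x (by rw [mem_WW] at hx; exact mem_LL.mpr (by omega))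

def Ty (n : ℕ) (U V W : ℕ → ℂ) (k : ℕ) : Prop :=
  (ZeroOn n k U ∨ ZeroOn n k V ∨ ZeroOn n k W) ∨
  (∃ A B C : ℂ, A ≠ 0 ∧ B ≠ 0 ∧ C ≠ 0 ∧
    isOn n k U (WWs n k) A ∧ isOn n k V (WWs n k) B ∧ isOn n k W (WWs n k) C) ∨
  (∃ k0, k ≤ k0 ∧ k0 + 1 ≤ n ∧ ∃ A B C : ℂ, A ≠ 0 ∧ B ≠ 0 ∧ C ≠ 0 ∧
    isOn n k U (Finset.Icc (k0+1) (2*n-1-k0)) A ∧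
    isOn n k V (Finset.Icc (k0+1) (2*n-1-k0)) B ∧
    isOn n k W (Finset.Icc (k0+1) (2*n-1-k0)) C) ∨
  (∃ k0, k ≤ k0 ∧ k0 + 1 ≤ n ∧ ∃ A B C : ℂ, A ≠ 0 ∧ B ≠ 0 ∧ C ≠ 0 ∧
    ((isOn n k U (LLs n k0) A ∧ isOn n k V (RRs n k0) B ∧ isOn n k W {k0} C) ∨
     (isOn n k U (RRs n k0) A ∧ isOn n k V {k0} B ∧ isOn n k W (LLs n k0) C) ∨
     (isOn n k U {k0} A ∧ isOn n k V (LLs n k0) B ∧ isOn n k W (RRs n k0) C) ∨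
     (isOn n k U (RRs n k0) A ∧ isOn n k V (LLs n k0) B ∧ isOn n k W {2*n-k0} C) ∨
     (isOn n k U (LLs n k0) A ∧ isOn n k V {2*n-k0} B ∧ isOn n k W (RRs n k0) C) ∨
     (isOn n k U {2*n-k0} A ∧ isOn n k V (RRs n k0) B ∧ isOn n k W (LLs n k0) C))) ∨
  (∃ p, p ∈ WWs n k ∧ ∃ A B C : ℂ, A ≠ 0 ∧ B ≠ 0 ∧ C ≠ 0 ∧
    isOn n k U {p} A ∧ isOn n k V {p} B ∧ isOn n k W {p} C)

lemma step0W {n k : ℕ} (hk : k+1 ≤ n) {U V W : ℕ → ℂ} (hC : C6 n k U V W)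
    (h0 : ∀ x ∈ Finset.Icc (k+1) (2*n-1-k), W x = 0) : Ty n U V W k := by
  rcases step0 hk hC h0 with h' | h' | h' | h' | h' | h' | h'
  · exact Or.inl (Or.inl h')
  · exact Or.inl (Or.inr (Or.inl h'))
  · exact Or.inl (Or.inr (Or.inr h'))
  · obtain ⟨A, B, C, hA, hB, hC0, h1, h2, h3⟩ := h'
    exact Or.inr (Or.inr (Or.inr (Or.inl ⟨k, le_refl k, hk, A, B, C, hA, hB, hC0,
      Or.inl ⟨h1, h2, h3⟩⟩)))
  · obtain ⟨A, B, C, hA, hB, hC0, h1, h2, h3⟩ := h'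
    exact Or.inr (Or.inr (Or.inr (Or.inl ⟨k, le_refl k, hk, A, B, C, hA, hB, hC0,
      Or.inr (Or.inr (Or.inr (Or.inl ⟨h1, h2, h3⟩)))⟩)))
  · obtain ⟨A, B, C, hA, hB, hC0, h1, h2, h3⟩ := h'
    exact Or.inr (Or.inr (Or.inr (Or.inr ⟨k, mem_WW.mpr (by omega), A, B, C, hA, hB, hC0,
      h1, h2, h3⟩)))
  · obtain ⟨A, B, C, hA, hB, hC0, h1, h2, h3⟩ := h'
    exact Or.inr (Or.inr (Or.inr (Or.inr ⟨2*n-k, mem_WW.mpr (by omega), A, B, C, hA, hB, hC0,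
      h1, h2, h3⟩)))

lemma step0U {n k : ℕ} (hk : k+1 ≤ n) {U V W : ℕ → ℂ} (hC : C6 n k U V W)
    (h0 : ∀ x ∈ Finset.Icc (k+1) (2*n-1-k), U x = 0) : Ty n U V W k := by
  rcases step0 hk hC.cyc h0 with h' | h' | h' | h' | h' | h' | h'
  · exact Or.inl (Or.inr (Or.inl h'))
  · exact Or.inl (Or.inr (Or.inr h'))
  · exact Or.inl (Or.inl h')
  · obtain ⟨A, B, C, hA, hB, hC0, h1, h2, h3⟩ := h'
    exact Or.inr (Or.inr (Or.inr (Or.inl ⟨k, le_refl k, hk, C, A, B, hC0, hA, hB,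
      Or.inr (Or.inr (Or.inl ⟨h3, h1, h2⟩))⟩)))
  · obtain ⟨A, B, C, hA, hB, hC0, h1, h2, h3⟩ := h'
    exact Or.inr (Or.inr (Or.inr (Or.inl ⟨k, le_refl k, hk, C, A, B, hC0, hA, hB,
      Or.inr (Or.inr (Or.inr (Or.inr (Or.inr ⟨h3, h1, h2⟩))))⟩)))
  · obtain ⟨A, B, C, hA, hB, hC0, h1, h2, h3⟩ := h'
    exact Or.inr (Or.inr (Or.inr (Or.inr ⟨k, mem_WW.mpr (by omega), C, A, B, hC0, hA, hB,
      h3, h1, h2⟩)))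
  · obtain ⟨A, B, C, hA, hB, hC0, h1, h2, h3⟩ := h'
    exact Or.inr (Or.inr (Or.inr (Or.inr ⟨2*n-k, mem_WW.mpr (by omega), C, A, B, hC0, hA, hB,
      h3, h1, h2⟩)))

lemma step0V {n k : ℕ} (hk : k+1 ≤ n) {U V W : ℕ → ℂ} (hC : C6 n k U V W)
    (h0 : ∀ x ∈ Finset.Icc (k+1) (2*n-1-k), V x = 0) : Ty n U V W k := by
  rcases step0 hk hC.cyc.cyc h0 with h' | h' | h' | h' | h' | h' | h'
  · exact Or.inl (Or.inr (Or.inr h'))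
  · exact Or.inl (Or.inl h')
  · exact Or.inl (Or.inr (Or.inl h'))
  · obtain ⟨A, B, C, hA, hB, hC0, h1, h2, h3⟩ := h'
    exact Or.inr (Or.inr (Or.inr (Or.inl ⟨k, le_refl k, hk, B, C, A, hB, hC0, hA,
      Or.inr (Or.inl ⟨h2, h3, h1⟩)⟩)))
  · obtain ⟨A, B, C, hA, hB, hC0, h1, h2, h3⟩ := h'
    exact Or.inr (Or.inr (Or.inr (Or.inl ⟨k, le_refl k, hk, B, C, A, hB, hC0, hA,
      Or.inr (Or.inr (Or.inr (Or.inr (Or.inl ⟨h2, h3, h1⟩))))⟩)))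
  · obtain ⟨A, B, C, hA, hB, hC0, h1, h2, h3⟩ := h'
    exact Or.inr (Or.inr (Or.inr (Or.inr ⟨k, mem_WW.mpr (by omega), B, C, A, hB, hC0, hA,
      h2, h3, h1⟩)))
  · obtain ⟨A, B, C, hA, hB, hC0, h1, h2, h3⟩ := h'
    exact Or.inr (Or.inr (Or.inr (Or.inr ⟨2*n-k, mem_WW.mpr (by omega), B, C, A, hB, hC0, hA,
      h2, h3, h1⟩)))

lemma step1Ty {n k : ℕ} (hk : k+1 ≤ n) {U V W : ℕ → ℂ} (hC : C6 n k U V W) {a b c : ℂ}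
    (ha : a ≠ 0) (hb : b ≠ 0) (hc : c ≠ 0)
    (hU : ∀ x ∈ Finset.Icc (k+1) (2*n-1-k), U x = a)
    (hV : ∀ x ∈ Finset.Icc (k+1) (2*n-1-k), V x = b)
    (hW : ∀ x ∈ Finset.Icc (k+1) (2*n-1-k), W x = c) : Ty n U V W k := by
  rcases step1 hk hC ha hb hc hU hV hW with
    ⟨h1, h2, h3, h4, h5, h6⟩ | ⟨h1, h2, h3, h4, h5, h6⟩
  · refine Or.inr (Or.inl ⟨a, b, c, ha, hb, hc, ?_, ?_, ?_⟩)
    · intro x hx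
      rw [if_pos hx]
      rw [mem_WW] at hx
      by_cases e1 : x = k
      · rw [e1]; exact h1
      · by_cases e2 : x = 2*n-k
        · rw [e2]; exact h2
        · exact hU x (by simp [Finset.mem_Icc]; omega)
    · intro x hx
      rw [if_pos hx]
      rw [mem_WW] at hx
      by_cases e1 : x = k
      · rw [e1]; exact h3
      · by_cases e2 : x = 2*n-k
        · rw [e2]; exact h4
        · exact hV x (by simp [Finset.mem_Icc]; omega)
    · intro x hx
      rw [if_pos hx]
      rw [mem_WW] at hx
      by_cases e1 : x = k
      · rw [e1]; exact h5
      · by_cases e2 : x = 2*n-k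
        · rw [e2]; exact h6
        · exact hW x (by simp [Finset.mem_Icc]; omega)
  · refine Or.inr (Or.inr (Or.inl ⟨k, le_refl k, hk, a, b, c, ha, hb, hc, ?_, ?_, ?_⟩))
    · intro x hx
      rw [mem_WW] at hx
      by_cases hxI : x ∈ Finset.Icc (k+1) (2*n-1-k)
      · rw [if_pos hxI]; exact hU x hxI
      · rw [if_neg hxI]
        simp [Finset.mem_Icc] at hxI
        by_cases e1 : x = k
        · rw [e1]; exact h1
        · rw [show x = 2*n-k by omega]; exact h2
    · intro x hx
      rw [mem_WW] at hx
      by_cases hxI : x ∈ Finset.Icc (k+1) (2*n-1-k)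
      · rw [if_pos hxI]; exact hV x hxI
      · rw [if_neg hxI]
        simp [Finset.mem_Icc] at hxI
        by_cases e1 : x = k
        · rw [e1]; exact h3
        · rw [show x = 2*n-k by omega]; exact h4
    · intro x hx
      rw [mem_WW] at hx
      by_cases hxI : x ∈ Finset.Icc (k+1) (2*n-1-k)
      · rw [if_pos hxI]; exact hW x hxI
      · rw [if_neg hxI]
        simp [Finset.mem_Icc] at hxI
        by_cases e1 : x = k
        · rw [e1]; exact h5
        · rw [show x = 2*n-k by omega]; exact h6

lemma baseTy {n k : ℕ} (hkn : k + 1 = n) {U V W : ℕ → ℂ} (hC : C6 n k U V W) :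
    Ty n U V W k := by
  have hk : k + 1 ≤ n := le_of_eq hkn
  have hcent : ∀ x, x ∈ Finset.Icc (k+1) (2*n-1-k) → x = n := by
    intro x hx; simp [Finset.mem_Icc] at hx; omega
  by_cases hU0 : U n = 0
  · exact step0U hk hC (fun x hx => by rw [hcent x hx]; exact hU0)
  · by_cases hV0 : V n = 0
    · exact step0V hk hC (fun x hx => by rw [hcent x hx]; exact hV0)
    · by_cases hW0 : W n = 0
      · exact step0W hk hC (fun x hx => by rw [hcent x hx]; exact hW0)
      · exact step1Ty hk hC hU0 hV0 hW0
          (fun x hx => by rw [hcent x hx]) (fun x hx => by rw [hcent x hx])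
          (fun x hx => by rw [hcent x hx])

def Side (n k : ℕ) (S : Finset ℕ) : Prop :=
  (∃ x ∈ WWs n (k+1), x ∈ S) ∧ (∃ x ∈ WWs n (k+1), x ∉ S) ∧ k ∉ S ∧ (2*n-k) ∉ S

lemma wit_general {n k : ℕ} {F : ℕ → ℂ} {S : Finset ℕ} {c : ℂ}
    (hF : isOn n (k+1) F S c) (hc : c ≠ 0) (hs : Side n k S) :
    (∃ x ∈ WWs n (k+1), F x ≠ 0) ∧ (∃ x ∈ WWs n (k+1), ∃ y ∈ WWs n (k+1), F x ≠ F y) := by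
  obtain ⟨⟨pIn, hIn, hInS⟩, ⟨pOut, hOut, hOutS⟩, _, _⟩ := hs
  have h1 : F pIn = c := by rw [hF pIn hIn, if_pos hInS]
  have h2 : F pOut = 0 := by rw [hF pOut hOut, if_neg hOutS]
  exact ⟨⟨pIn, hIn, by rw [h1]; exact hc⟩,
    ⟨pIn, hIn, pOut, hOut, by rw [h1, h2]; exact hc⟩⟩

lemma extend_isOn {n k : ℕ} {F : ℕ → ℂ} {S : Finset ℕ} {c : ℂ}
    (hF : isOn n (k+1) F S c) (hFk : F k = 0) (hF2 : F (2*n-k) = 0)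
    (hS1 : k ∉ S) (hS2 : (2*n-k) ∉ S) (hk2 : k+2 ≤ n) : isOn n k F S c := by
  intro x hx
  rw [mem_WW] at hx
  by_cases h1 : x = k
  · rw [h1, if_neg hS1]; exact hFk
  · by_cases h2 : x = 2*n-k
    · rw [h2, if_neg hS2]; exact hF2
    · exact hF x (mem_WW.mpr (by omega))

lemma extend_step {n k : ℕ} (hk2 : k+2 ≤ n) {U V W : ℕ → ℂ} (hC : C6 n k U V W)
    {SU SV SW : Finset ℕ} {A B C : ℂ} (hA : A ≠ 0) (hB : B ≠ 0) (hC0 : C ≠ 0)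
    (hU : isOn n (k+1) U SU A) (hV : isOn n (k+1) V SV B) (hW : isOn n (k+1) W SW C)
    (sU : Side n k SU) (sV : Side n k SV) (sW : Side n k SW) :
    isOn n k U SU A ∧ isOn n k V SV B ∧ isOn n k W SW C := by
  obtain ⟨wU1, wU2⟩ := wit_general hU hA sU
  obtain ⟨wV1, wV2⟩ := wit_general hV hB sV
  obtain ⟨wW1, wW2⟩ := wit_general hW hC0 sW
  obtain ⟨z1, z2, z3, z4, z5, z6⟩ := bkill hk2 hC wU1 wU2 wV1 wV2 wW1 wW2
  exact ⟨extend_isOn hU z1 z2 sU.2.2.1 sU.2.2.2 hk2,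
    extend_isOn hV z3 z4 sV.2.2.1 sV.2.2.2 hk2,
    extend_isOn hW z5 z6 sW.2.2.1 sW.2.2.2 hk2⟩

lemma sideLL {n k k0 : ℕ} (hk2 : k+2 ≤ n) (h1 : k+1 ≤ k0) (h2 : k0+1 ≤ n) :
    Side n k (LLs n k0) :=
  ⟨⟨k0, mem_WW.mpr (by omega), mem_LL.mpr (by omega)⟩,
   ⟨2*n-k0, mem_WW.mpr (by omega), by rw [mem_LL]; omega⟩,
   by rw [mem_LL]; omega, by rw [mem_LL]; omega⟩

lemma sideRR {n k k0 : ℕ} (hk2 : k+2 ≤ n) (h1 : k+1 ≤ k0) (h2 : k0+1 ≤ n) :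
    Side n k (RRs n k0) :=
  ⟨⟨k0+1, mem_WW.mpr (by omega), mem_RR.mpr (by omega)⟩,
   ⟨k0, mem_WW.mpr (by omega), by rw [mem_RR]; omega⟩,
   by rw [mem_RR]; omega, by rw [mem_RR]; omega⟩

lemma sideI {n k k0 : ℕ} (hk2 : k+2 ≤ n) (h1 : k+1 ≤ k0) (h2 : k0+1 ≤ n) :
    Side n k (Finset.Icc (k0+1) (2*n-1-k0)) :=
  ⟨⟨k0+1, mem_WW.mpr (by omega), by simp [Finset.mem_Icc]; omega⟩,
   ⟨k+1, mem_WW.mpr (by omega), by simp [Finset.mem_Icc]; omega⟩,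
   by simp [Finset.mem_Icc]; omega, by simp [Finset.mem_Icc]; omega⟩

lemma sidePt {n k p : ℕ} (hk2 : k+2 ≤ n) (hp : p ∈ WWs n (k+1)) :
    Side n k ({p} : Finset ℕ) := by
  rw [mem_WW] at hp
  refine ⟨⟨p, mem_WW.mpr (by omega), Finset.mem_singleton_self p⟩, ?_,
    by simp [Finset.mem_singleton]; omega, by simp [Finset.mem_singleton]; omega⟩
  by_cases hpk : p = k+1
  · exact ⟨k+2, mem_WW.mpr (by omega), by simp [Finset.mem_singleton]; omega⟩
  · exact ⟨k+1, mem_WW.mpr (by omega), by simp [Finset.mem_singleton]; omega⟩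

lemma stepTy {n k : ℕ} (hk2 : k+2 ≤ n) {U V W : ℕ → ℂ} (hC : C6 n k U V W)
    (hTy : Ty n U V W (k+1)) : Ty n U V W k := by
  have hk : k+1 ≤ n := by omega
  have hconv : ∀ x, x ∈ Finset.Icc (k+1) (2*n-1-k) → x ∈ WWs n (k+1) := by
    intro x hx; simp [Finset.mem_Icc] at hx; exact mem_WW.mpr (by omega)
  rcases hTy with (h0 | h0 | h0) | hTy1 | hTy2 | hTy3 | hTy4
  · exact step0U hk hC (fun x hx => h0 x (hconv x hx))
  · exact step0V hk hC (fun x hx => h0 x (hconv x hx))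
  · exact step0W hk hC (fun x hx => h0 x (hconv x hx))
  · obtain ⟨A, B, C, hA, hB, hC0, h1, h2, h3⟩ := hTy1
    apply step1Ty hk hC hA hB hC0
    · intro x hx
      rw [h1 x (hconv x hx), if_pos (hconv x hx)]
    · intro x hx
      rw [h2 x (hconv x hx), if_pos (hconv x hx)]
    · intro x hx
      rw [h3 x (hconv x hx), if_pos (hconv x hx)]
  · obtain ⟨k0, hkk0, hk0n, A, B, C, hA, hB, hC0, h1, h2, h3⟩ := hTy2
    obtain ⟨e1, e2, e3⟩ := extend_step hk2 hC hA hB hC0 h1 h2 h3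
      (sideI hk2 hkk0 hk0n) (sideI hk2 hkk0 hk0n) (sideI hk2 hkk0 hk0n)
    exact Or.inr (Or.inr (Or.inl ⟨k0, by omega, hk0n, A, B, C, hA, hB, hC0, e1, e2, e3⟩))
  · obtain ⟨k0, hkk0, hk0n, A, B, C, hA, hB, hC0, hvar⟩ := hTy3
    have hptk0 : (k0 : ℕ) ∈ WWs n (k+1) := mem_WW.mpr (by omega)
    have hptk0' : (2*n-k0 : ℕ) ∈ WWs n (k+1) := mem_WW.mpr (by omega)
    rcases hvar with ⟨h1,h2,h3⟩ | ⟨h1,h2,h3⟩ | ⟨h1,h2,h3⟩ | ⟨h1,h2,h3⟩ | ⟨h1,h2,h3⟩ | ⟨h1,h2,h3⟩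
    · obtain ⟨e1, e2, e3⟩ := extend_step hk2 hC hA hB hC0 h1 h2 h3
        (sideLL hk2 hkk0 hk0n) (sideRR hk2 hkk0 hk0n) (sidePt hk2 hptk0)
      exact Or.inr (Or.inr (Or.inr (Or.inl ⟨k0, by omega, hk0n, A, B, C, hA, hB, hC0,
        Or.inl ⟨e1, e2, e3⟩⟩)))
    · obtain ⟨e1, e2, e3⟩ := extend_step hk2 hC hA hB hC0 h1 h2 h3
        (sideRR hk2 hkk0 hk0n) (sidePt hk2 hptk0) (sideLL hk2 hkk0 hk0n)
      exact Or.inr (Or.inr (Or.inr (Or.inl ⟨k0, by omega, hk0n, A, B, C, hA, hB, hC0,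
        Or.inr (Or.inl ⟨e1, e2, e3⟩)⟩)))
    · obtain ⟨e1, e2, e3⟩ := extend_step hk2 hC hA hB hC0 h1 h2 h3
        (sidePt hk2 hptk0) (sideLL hk2 hkk0 hk0n) (sideRR hk2 hkk0 hk0n)
      exact Or.inr (Or.inr (Or.inr (Or.inl ⟨k0, by omega, hk0n, A, B, C, hA, hB, hC0,
        Or.inr (Or.inr (Or.inl ⟨e1, e2, e3⟩))⟩)))
    · obtain ⟨e1, e2, e3⟩ := extend_step hk2 hC hA hB hC0 h1 h2 h3
        (sideRR hk2 hkk0 hk0n) (sideLL hk2 hkk0 hk0n) (sidePt hk2 hptk0')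
      exact Or.inr (Or.inr (Or.inr (Or.inl ⟨k0, by omega, hk0n, A, B, C, hA, hB, hC0,
        Or.inr (Or.inr (Or.inr (Or.inl ⟨e1, e2, e3⟩)))⟩)))
    · obtain ⟨e1, e2, e3⟩ := extend_step hk2 hC hA hB hC0 h1 h2 h3
        (sideLL hk2 hkk0 hk0n) (sidePt hk2 hptk0') (sideRR hk2 hkk0 hk0n)
      exact Or.inr (Or.inr (Or.inr (Or.inl ⟨k0, by omega, hk0n, A, B, C, hA, hB, hC0,
        Or.inr (Or.inr (Or.inr (Or.inr (Or.inl ⟨e1, e2, e3⟩))))⟩)))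
    · obtain ⟨e1, e2, e3⟩ := extend_step hk2 hC hA hB hC0 h1 h2 h3
        (sidePt hk2 hptk0') (sideRR hk2 hkk0 hk0n) (sideLL hk2 hkk0 hk0n)
      exact Or.inr (Or.inr (Or.inr (Or.inl ⟨k0, by omega, hk0n, A, B, C, hA, hB, hC0,
        Or.inr (Or.inr (Or.inr (Or.inr (Or.inr ⟨e1, e2, e3⟩))))⟩)))
  · obtain ⟨p, hp, A, B, C, hA, hB, hC0, h1, h2, h3⟩ := hTy4
    obtain ⟨e1, e2, e3⟩ := extend_step hk2 hC hA hB hC0 h1 h2 h3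
      (sidePt hk2 hp) (sidePt hk2 hp) (sidePt hk2 hp)
    have hp' : p ∈ WWs n k := by
      rw [mem_WW] at hp ⊢; omega
    exact Or.inr (Or.inr (Or.inr (Or.inr ⟨p, hp', A, B, C, hA, hB, hC0, e1, e2, e3⟩)))

lemma main_ind (n : ℕ) (hn : 1 ≤ n) (U V W : ℕ → ℂ)
    (hC : ∀ k, k + 1 ≤ n → C6 n k U V W) : Ty n U V W 0 := by
  suffices H : ∀ j k, k + 1 ≤ n → n = k + 1 + j → Ty n U V W k by
    exact H (n-1) 0 hn (by omega)
  intro j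
  induction j with
  | zero =>
    intro k hk hnk
    exact baseTy (by omega) (hC k hk)
  | succ j ih =>
    intro k hk hnk
    exact stepTy (by omega) (hC k hk) (ih (k+1) (by omega) (by omega))


lemma mk_TC {m n k : ℕ} (hm : 0 < m) (hmk : m = 2*n - 2*k) (hk : k+1 ≤ n) {p q : ℕ → ℂ} {β : ℂ}
    (H : ∀ i j : ℕ, i < m → j < m → ¬(i = 0 ∧ j = 0) →
      (∑ s ∈ range m, (conj (wN m))^(j*s) * p (k+1+s)) * β *
      (∑ t ∈ range m, (conj (wN m))^(i*t) * q (k+t)) = 0) :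
    TCc n k β p q := by
  have key := keyDFT m hm (fun s => p (k+1+s)) (fun t => q (k+t)) β H
  intro x hx y hy x' hx' y' hy'
  rw [mem_RR] at hx hx'
  rw [mem_LL] at hy hy'
  have := key (x-(k+1)) (y-k) (x'-(k+1)) (y'-k) (by omega) (by omega) (by omega) (by omega)
  rw [show k+1+(x-(k+1)) = x by omega, show k+(y-k) = y by omega,
      show k+1+(x'-(k+1)) = x' by omega, show k+(y'-k) = y' by omega] at this
  exact this

lemma sum_isOn {d n : ℕ} (hd : d = 2*n+1) {F : ℕ → ℂ} {S : Finset ℕ} {c : ℂ}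
    (hF : isOn n 0 F S c) (hS : S ⊆ Finset.range d) :
    ∑ t ∈ Finset.range d, F t = (S.card : ℂ) * c := by
  have e1 : ∀ t ∈ range d, F t = if t ∈ S then c else 0 := by
    intro t ht
    simp only [Finset.mem_range] at ht
    exact hF t (mem_WW.mpr (by omega))
  rw [Finset.sum_congr rfl e1, Finset.sum_ite_mem, Finset.inter_eq_right.mpr hS,
    Finset.sum_const, nsmul_eq_mul]

lemma sum_ne_isOn {d n : ℕ} (hd : d = 2*n+1) {F : ℕ → ℂ} {S : Finset ℕ} {c : ℂ}
    (hF : isOn n 0 F S c) (hS : S ⊆ Finset.range d) (hne : S.Nonempty) (hc : c ≠ 0) :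
    ∑ t ∈ Finset.range d, F t ≠ 0 := by
  rw [sum_isOn hd hF hS]
  refine mul_ne_zero ?_ hc
  rw [Nat.cast_ne_zero]
  exact Finset.card_ne_zero_of_mem hne.choose_spec

end UPBaux

open Finset ComplexConjugate in
/-- For every odd d ≥ 3, U_d^odd is an unextendible product basis: any product
vector orthogonal to every member of U_d^odd is zero. -/
theorem Uodd_unextendible (d : ℕ) (hd : 3 ≤ d) (hodd : Odd d)
    (u v w : Fin d → ℂ)
    (h : ∀ x ∈ Uodd d, inpD d x (tpv d u v w) = 0) :
    tpv d u v w = 0 := by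
  have hd2 : d % 2 = 1 := Nat.odd_iff.mp hodd
  obtain ⟨n, hdn⟩ : ∃ n, d = 2*n+1 := ⟨d/2, by omega⟩
  have hn : 1 ≤ n := by omega
  -- the six tile conditions at every level
  have hC : ∀ k, k + 1 ≤ n → C6 n k (zext d u) (zext d v) (zext d w) := by
    intro k hk
    have hkd : 2*k+2 ≤ d := by omega
    have hm : 0 < d-1-2*k := by omega
    have hmk : d-1-2*k = 2*n-2*k := by omega
    have hkK : k ≤ (d-3)/2 := by omega
    have hrw : d-1-k = 2*n-k := by omega
    refine ⟨?_, ?_, ?_, ?_, ?_, ?_⟩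
    · -- c1 : TCc n k (V k) U W  from A1
      apply mk_TC hm hmk hk
      intro i j hi hj hij
      have hmem : tpv d (xiG d k j) (eV d k) (etaG d k i) ∈ Uodd d :=
        Or.inl ⟨k, hkK, i, j, hi, hj, hij, Or.inl rfl⟩
      have t := h _ hmem
      rw [inp_factor, ip_xi d k j u hkd, ip_eV, ip_eta d k i w hkd] at t
      linear_combination t
    · -- c2 : TCc n k (W (2n-k)) U V  from A2
      apply mk_TC hm hmk hk
      intro i j hi hj hij
      have hmem : tpv d (xiG d k j) (etaG d k i) (eV d (d-1-k)) ∈ Uodd d :=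
        Or.inl ⟨k, hkK, i, j, hi, hj, hij, Or.inr (Or.inl rfl)⟩
      have t := h _ hmem
      rw [inp_factor, ip_xi d k j u hkd, ip_eta d k i v hkd, ip_eV, hrw] at t
      linear_combination t
    · -- c3 : TCc n k (U (2n-k)) V W  from A3
      apply mk_TC hm hmk hk
      intro i j hi hj hij
      have hmem : tpv d (eV d (d-1-k)) (xiG d k j) (etaG d k i) ∈ Uodd d :=
        Or.inl ⟨k, hkK, i, j, hi, hj, hij, Or.inr (Or.inr (Or.inl rfl))⟩
      have t := h _ hmem
      rw [inp_factor, ip_eV, ip_xi d k j v hkd, ip_eta d k i w hkd, hrw] at t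
      linear_combination t
    · -- c4 : TCc n k (V (2n-k)) W U  from B1
      apply mk_TC hm hmk hk
      intro i j hi hj hij
      have hmem : tpv d (etaG d k i) (eV d (d-1-k)) (xiG d k j) ∈ Uodd d :=
        Or.inl ⟨k, hkK, i, j, hi, hj, hij, Or.inr (Or.inr (Or.inr (Or.inl rfl)))⟩
      have t := h _ hmem
      rw [inp_factor, ip_eta d k i u hkd, ip_eV, ip_xi d k j w hkd, hrw] at t
      linear_combination t
    · -- c5 : TCc n k (W k) V U  from B2
      apply mk_TC hm hmk hk
      intro i j hi hj hij
      have hmem : tpv d (etaG d k i) (xiG d k j) (eV d k) ∈ Uodd d :=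
        Or.inl ⟨k, hkK, i, j, hi, hj, hij, Or.inr (Or.inr (Or.inr (Or.inr (Or.inl rfl))))⟩
      have t := h _ hmem
      rw [inp_factor, ip_eta d k i u hkd, ip_xi d k j v hkd, ip_eV] at t
      linear_combination t
    · -- c6 : TCc n k (U k) W V  from B3
      apply mk_TC hm hmk hk
      intro i j hi hj hij
      have hmem : tpv d (eV d k) (etaG d k i) (xiG d k j) ∈ Uodd d :=
        Or.inl ⟨k, hkK, i, j, hi, hj, hij, Or.inr (Or.inr (Or.inr (Or.inr (Or.inr rfl))))⟩
      have t := h _ hmem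
      rw [inp_factor, ip_eV, ip_eta d k i v hkd, ip_xi d k j w hkd] at t
      linear_combination t
  -- the stopper condition
  have hstop := h (stopD d) (Or.inr rfl)
  unfold stopD at hstop
  rw [inp_factor, ip_ones d u, ip_ones d v, ip_ones d w] at hstop
  -- the classification at level 0
  have hTy := main_ind n hn (zext d u) (zext d v) (zext d w) hC
  have hzero : ∀ z : Fin d → ℂ, (∀ x ∈ WWs n 0, zext d z x = 0) → ∀ x : Fin d, z x = 0 := by
    intro z hz x
    rw [← zext_coe d z x]
    exact hz _ (mem_WW.mpr (by have := x.isLt; omega))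
  rcases hTy with (h0 | h0 | h0) | hTy1 | hTy2 | hTy3 | hTy4
  · funext p
    show u p.1 * v p.2.1 * w p.2.2 = _
    rw [hzero u h0 p.1]
    simp
  · funext p
    show u p.1 * v p.2.1 * w p.2.2 = _
    rw [hzero v h0 p.2.1]
    simp
  · funext p
    show u p.1 * v p.2.1 * w p.2.2 = _
    rw [hzero w h0 p.2.2]
    simp
  · exfalso
    obtain ⟨A, B, C, hA, hB, hC0, h1, h2, h3⟩ := hTy1
    have hsub : WWs n 0 ⊆ range d := by
      intro x hx; rw [mem_WW] at hx; rw [Finset.mem_range]; omega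
    have hne : (WWs n 0).Nonempty := ⟨0, mem_WW.mpr (by omega)⟩
    exact (mul_ne_zero (mul_ne_zero
      (sum_ne_isOn hdn h1 hsub hne hA) (sum_ne_isOn hdn h2 hsub hne hB))
      (sum_ne_isOn hdn h3 hsub hne hC0)) hstop
  · exfalso
    obtain ⟨k0, _, hk0n, A, B, C, hA, hB, hC0, h1, h2, h3⟩ := hTy2
    have hsub : Finset.Icc (k0+1) (2*n-1-k0) ⊆ range d := by
      intro x hx; simp only [Finset.mem_Icc] at hx; rw [Finset.mem_range]; omega
    have hne : (Finset.Icc (k0+1) (2*n-1-k0)).Nonempty := ⟨k0+1, by simp [Finset.mem_Icc]; omega⟩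
    exact (mul_ne_zero (mul_ne_zero
      (sum_ne_isOn hdn h1 hsub hne hA) (sum_ne_isOn hdn h2 hsub hne hB))
      (sum_ne_isOn hdn h3 hsub hne hC0)) hstop
  · exfalso
    obtain ⟨k0, _, hk0n, A, B, C, hA, hB, hC0, hvar⟩ := hTy3
    have hsubL : LLs n k0 ⊆ range d := by
      intro x hx; rw [mem_LL] at hx; rw [Finset.mem_range]; omega
    have hneL : (LLs n k0).Nonempty := ⟨k0, mem_LL.mpr (by omega)⟩
    have hsubR : RRs n k0 ⊆ range d := by
      intro x hx; rw [mem_RR] at hx; rw [Finset.mem_range]; omega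
    have hneR : (RRs n k0).Nonempty := ⟨k0+1, mem_RR.mpr (by omega)⟩
    have hsubP : ({k0} : Finset ℕ) ⊆ range d := by
      intro x hx; rw [Finset.mem_singleton] at hx; rw [Finset.mem_range]; omega
    have hneP : ({k0} : Finset ℕ).Nonempty := ⟨k0, Finset.mem_singleton_self k0⟩
    have hsubP' : ({2*n-k0} : Finset ℕ) ⊆ range d := by
      intro x hx; rw [Finset.mem_singleton] at hx; rw [Finset.mem_range]; omega
    have hneP' : ({2*n-k0} : Finset ℕ).Nonempty := ⟨2*n-k0, Finset.mem_singleton_self _⟩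
    rcases hvar with ⟨h1,h2,h3⟩ | ⟨h1,h2,h3⟩ | ⟨h1,h2,h3⟩ | ⟨h1,h2,h3⟩ | ⟨h1,h2,h3⟩ | ⟨h1,h2,h3⟩
    · exact (mul_ne_zero (mul_ne_zero
        (sum_ne_isOn hdn h1 hsubL hneL hA) (sum_ne_isOn hdn h2 hsubR hneR hB))
        (sum_ne_isOn hdn h3 hsubP hneP hC0)) hstop
    · exact (mul_ne_zero (mul_ne_zero
        (sum_ne_isOn hdn h1 hsubR hneR hA) (sum_ne_isOn hdn h2 hsubP hneP hB))
        (sum_ne_isOn hdn h3 hsubL hneL hC0)) hstop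
    · exact (mul_ne_zero (mul_ne_zero
        (sum_ne_isOn hdn h1 hsubP hneP hA) (sum_ne_isOn hdn h2 hsubL hneL hB))
        (sum_ne_isOn hdn h3 hsubR hneR hC0)) hstop
    · exact (mul_ne_zero (mul_ne_zero
        (sum_ne_isOn hdn h1 hsubR hneR hA) (sum_ne_isOn hdn h2 hsubL hneL hB))
        (sum_ne_isOn hdn h3 hsubP' hneP' hC0)) hstop
    · exact (mul_ne_zero (mul_ne_zero
        (sum_ne_isOn hdn h1 hsubL hneL hA) (sum_ne_isOn hdn h2 hsubP' hneP' hB))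
        (sum_ne_isOn hdn h3 hsubR hneR hC0)) hstop
    · exact (mul_ne_zero (mul_ne_zero
        (sum_ne_isOn hdn h1 hsubP' hneP' hA) (sum_ne_isOn hdn h2 hsubR hneR hB))
        (sum_ne_isOn hdn h3 hsubL hneL hC0)) hstop
  · exfalso
    obtain ⟨p, hp, A, B, C, hA, hB, hC0, h1, h2, h3⟩ := hTy4
    rw [mem_WW] at hp
    have hsub : ({p} : Finset ℕ) ⊆ range d := by
      intro x hx; rw [Finset.mem_singleton] at hx; rw [Finset.mem_range]; omega
    have hne : ({p} : Finset ℕ).Nonempty := ⟨p, Finset.mem_singleton_self p⟩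
    exact (mul_ne_zero (mul_ne_zero
      (sum_ne_isOn hdn h1 hsub hne hA) (sum_ne_isOn hdn h2 hsub hne hB))
      (sum_ne_isOn hdn h3 hsub hne hC0)) hstop
end
end

section
/- For every even integer d ≥ 4, the vectors of the set U_d^even = (⋃_{k=0}^{(d−4)/2} C^{(d,d−2k)}) ∪ A^{(d,0)} ∪ {S_d} in ℂ^(Fin d × Fin d × Fin d) are pairwise orthogonal and each is nonzero, and the set U_d^even has exactly d³ − 4d + 8 elements. -/
open scoped ComplexOrder

noncomputable section

namespace UPB
open Finset Complex

def inp1 (d : ℕ) (u v : Fin d → ℂ) : ℂ := ∑ a, (starRingEnd ℂ) (u a) * v a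

lemma inpD_tpv (d : ℕ) (u v w u' v' w' : Fin d → ℂ) :
    inpD d (tpv d u v w) (tpv d u' v' w') = inp1 d u u' * inp1 d v v' * inp1 d w w' := by
  have : inpD d (tpv d u v w) (tpv d u' v' w')
      = ∑ a : Fin d, ∑ b : Fin d, ∑ c : Fin d,
        ((starRingEnd ℂ) (u a) * u' a) * (((starRingEnd ℂ) (v b) * v' b) *
          ((starRingEnd ℂ) (w c) * w' c)) := by
    rw [inpD, Fintype.sum_prod_type]
    refine Finset.sum_congr rfl fun a _ => ?_
    rw [Fintype.sum_prod_type]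
    refine Finset.sum_congr rfl fun b _ => Finset.sum_congr rfl fun c _ => ?_
    simp only [tpv, map_mul]
    ring
  rw [this, inp1, inp1, inp1]
  simp only [← Finset.mul_sum, ← Finset.sum_mul]
  rw [mul_assoc]

lemma orth1 {d : ℕ} {u v w u' v' w' : Fin d → ℂ} (h : inp1 d u u' = 0) :
    inpD d (tpv d u v w) (tpv d u' v' w') = 0 := by
  rw [inpD_tpv, h, zero_mul, zero_mul]

lemma orth2 {d : ℕ} {u v w u' v' w' : Fin d → ℂ} (h : inp1 d v v' = 0) :
    inpD d (tpv d u v w) (tpv d u' v' w') = 0 := by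
  rw [inpD_tpv, h, mul_zero, zero_mul]

lemma orth3 {d : ℕ} {u v w u' v' w' : Fin d → ℂ} (h : inp1 d w w' = 0) :
    inpD d (tpv d u v w) (tpv d u' v' w') = 0 := by
  rw [inpD_tpv, h, mul_zero]

lemma inp1_conj (d : ℕ) (u v : Fin d → ℂ) :
    inp1 d u v = (starRingEnd ℂ) (inp1 d v u) := by
  simp only [inp1, map_sum, map_mul, Complex.conj_conj]
  exact Finset.sum_congr rfl fun a _ => mul_comm _ _

lemma inp1_symm_zero {d : ℕ} {u v : Fin d → ℂ} (h : inp1 d u v = 0) :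
    inp1 d v u = 0 := by
  rw [inp1_conj, h]; simp

lemma inpD_symm_zero {d : ℕ} {x y : Fin d × Fin d × Fin d → ℂ} (h : inpD d x y = 0) :
    inpD d y x = 0 := by
  have : inpD d y x = (starRingEnd ℂ) (inpD d x y) := by
    simp only [inpD, map_sum, map_mul, Complex.conj_conj]
    exact Finset.sum_congr rfl fun a _ => mul_comm _ _
  rw [this, h]; simp

lemma inp1_e_left {d a : ℕ} (ha : a < d) (v : Fin d → ℂ) :
    inp1 d (eV d a) v = v ⟨a, ha⟩ := by
  have h : ∀ x : Fin d, ((x : ℕ) = a) = (x = ⟨a, ha⟩) := fun x => by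
    simp [Fin.ext_iff]
  simp only [inp1, eV, h, apply_ite, map_one, map_zero, ite_mul, one_mul, zero_mul]
  simp

lemma inp1_e_right {d a : ℕ} (ha : a < d) (v : Fin d → ℂ) :
    inp1 d v (eV d a) = (starRingEnd ℂ) (v ⟨a, ha⟩) := by
  rw [inp1_conj, inp1_e_left ha]

lemma eV_apply {d a : ℕ} (x : Fin d) : eV d a x = if (x : ℕ) = a then 1 else 0 := rfl

lemma inp1_e_e_ne {d a b : ℕ} (ha : a < d) (hab : a ≠ b) :
    inp1 d (eV d a) (eV d b) = 0 := by
  rw [inp1_e_left ha, eV_apply]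
  simp [hab]

lemma inp1_e_e_self {d a : ℕ} (ha : a < d) :
    inp1 d (eV d a) (eV d a) = 1 := by
  rw [inp1_e_left ha, eV_apply]
  simp

lemma sum_fin_ite {d : ℕ} (s : Finset ℕ) (hs : ∀ t ∈ s, t < d) (g : ℕ → ℂ) :
    ∑ a : Fin d, (if (a : ℕ) ∈ s then g (a : ℕ) else 0) = ∑ t ∈ s, g t := by
  rw [Fin.sum_univ_eq_sum_range (fun t => if t ∈ s then g t else 0) d]
  rw [Finset.sum_ite_mem]
  congr 1
  exact Finset.inter_eq_right.2 (fun t ht => Finset.mem_range.2 (hs t ht))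

lemma wN_pow_self {m : ℕ} (hm : m ≠ 0) : wN m ^ m = 1 :=
  (Complex.isPrimitiveRoot_exp m hm).pow_eq_one

lemma wN_pow_eq_one_iff {m : ℕ} (hm : m ≠ 0) (e : ℕ) : wN m ^ e = 1 ↔ m ∣ e :=
  (Complex.isPrimitiveRoot_exp m hm).pow_eq_one_iff_dvd e

lemma geom_wN {m : ℕ} (hm : m ≠ 0) (e : ℕ) :
    ∑ s ∈ Finset.range m, wN m ^ (e * s) = if m ∣ e then (m : ℂ) else 0 := by
  simp only [pow_mul]
  by_cases h : m ∣ e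
  · have h1 : wN m ^ e = 1 := (wN_pow_eq_one_iff hm e).2 h
    simp [h1, h]
  · have h1 : wN m ^ e ≠ 1 := fun hh => h ((wN_pow_eq_one_iff hm e).1 hh)
    rw [geom_sum_eq h1]
    rw [← pow_mul, mul_comm e m, pow_mul, wN_pow_self hm, one_pow, sub_self, zero_div]
    simp [h]

lemma wN_abs {m : ℕ} (hm : m ≠ 0) : ‖wN m‖ = 1 := by
  have h := congrArg norm (wN_pow_self hm)
  rw [norm_pow, norm_one] at h
  have h0 : (0:ℝ) ≤ ‖wN m‖ := norm_nonneg _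
  rcases lt_trichotomy (‖wN m‖) 1 with hlt | heq | hgt
  · exact absurd h (by have := pow_lt_one₀ h0 hlt hm; linarith)
  · exact heq
  · exact absurd h (by have := one_lt_pow₀ hgt hm; linarith)

lemma conj_wN_pow {m : ℕ} (hm : m ≠ 0) (p : ℕ) :
    (starRingEnd ℂ) (wN m ^ p) = wN m ^ ((m - 1) * p) := by
  have habs : ‖wN m‖ = 1 := wN_abs hm
  have hinv : (wN m)⁻¹ = (starRingEnd ℂ) (wN m) := Complex.inv_eq_conj habs
  have hpow : wN m ^ (m - 1) = (wN m)⁻¹ := by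
    have hne : wN m ≠ 0 := by
      intro h0; rw [h0] at habs; simp at habs
    field_simp
    rw [← pow_succ]
    have : m - 1 + 1 = m := by omega
    rw [this, wN_pow_self hm]
  rw [map_pow, ← hinv, ← hpow, ← pow_mul]


lemma etaG_apply (d k i : ℕ) (a : Fin d) :
    etaG d k i a = if (a : ℕ) ∈ Finset.Icc k (d - 2 - k)
      then wN (d - 1 - 2 * k) ^ (i * ((a : ℕ) - k)) else 0 := by
  unfold etaG eV
  simp only [mul_ite, mul_one, mul_zero]
  rw [Finset.sum_ite_eq (Finset.Icc k (d-2-k)) ((a : ℕ))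
    (fun t => wN (d - 1 - 2*k) ^ (i * (t - k)))]

lemma xiG_apply (d k j : ℕ) (hk : k + 2 ≤ d) (a : Fin d) :
    xiG d k j a = if (a : ℕ) ∈ Finset.Icc (k+1) (d - 1 - k)
      then wN (d - 1 - 2 * k) ^ (j * ((a : ℕ) - (k+1))) else 0 := by
  unfold xiG eV
  set g : ℕ → ℂ := fun u => wN (d-1-2*k) ^ (j * (u - (k+1))) *
    (if ((a:ℕ) = u) then (1:ℂ) else 0) with hg
  have h1 : ∀ t ∈ Finset.Icc k (d-2-k),
      wN (d-1-2*k) ^ (j * (t - k)) * (if ((a:ℕ) = t + 1) then (1:ℂ) else 0) = g (t+1) := by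
    intro t _
    rw [hg]
    have h2 : t + 1 - (k+1) = t - k := by omega
    simp only [h2]
  rw [Finset.sum_congr rfl h1]
  have key : ∑ t ∈ Finset.Icc k (d-2-k), g (t+1)
      = ∑ u ∈ Finset.Icc (k+1) (d-1-k), g u := by
    have h3 : Finset.Icc (k+1) (d-1-k) = (Finset.Icc k (d-2-k)).map (addRightEmbedding 1) := by
      rw [Finset.map_add_right_Icc]
      congr 1
      omega
    rw [h3, Finset.sum_map]
    rfl
  rw [key, hg]
  simp only [mul_ite, mul_one, mul_zero]
  rw [Finset.sum_ite_eq (Finset.Icc (k+1) (d-1-k)) ((a : ℕ))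
    (fun u => wN (d - 1 - 2*k) ^ (j * (u - (k+1))))]

lemma geom_shift {m : ℕ} (hm : m ≠ 0) (k0 e : ℕ) :
    ∑ t ∈ Finset.Icc k0 (k0 + (m-1)), wN m ^ (e * (t - k0))
      = if m ∣ e then (m : ℂ) else 0 := by
  have h1 : Finset.Icc k0 (k0 + (m-1)) = Finset.Ico k0 (k0 + m) := by
    rw [← Finset.Ico_add_one_right_eq_Icc]
    congr 1
    omega
  rw [h1, Finset.sum_Ico_eq_sum_range]
  have h2 : k0 + m - k0 = m := by omega
  rw [h2]
  have h3 : ∀ s, e * (k0 + s - k0) = e * s := fun s => by congr 1; omega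
  simp only [h3]
  exact geom_wN hm e

lemma dvd_combo_iff {m : ℕ} (hm : m ≠ 0) {i i' : ℕ} (hi : i < m) (hi' : i' < m) :
    m ∣ ((m-1) * i + i') ↔ i = i' := by
  constructor
  · intro h
    have hz : (m : ℤ) ∣ ((m : ℤ) - 1) * i + i' := by
      have := Int.natCast_dvd_natCast.2 h
      push_cast at this
      have hc : ((m - 1 : ℕ) : ℤ) = (m : ℤ) - 1 := by
        have : 1 ≤ m := Nat.one_le_iff_ne_zero.2 hm
        omega
      rw [hc] at this
      exact this
    have hz2 : (m : ℤ) ∣ ((i' : ℤ) - i) := by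
      have : ((m : ℤ) - 1) * i + i' = (m : ℤ) * i + ((i' : ℤ) - i) := by ring
      rw [this] at hz
      exact (Int.dvd_add_right ⟨i, rfl⟩).1 hz
    obtain ⟨c, hc⟩ := hz2
    have hmz : (0 : ℤ) < m := by exact_mod_cast Nat.pos_of_ne_zero hm
    have hb1 : (i' : ℤ) - i < m := by
      have : (i' : ℤ) < m := by exact_mod_cast hi'
      omega
    have hb2 : -(m : ℤ) < (i' : ℤ) - i := by
      have : (i : ℤ) < m := by exact_mod_cast hi
      omega
    have hc0 : c = 0 := by
      rcases lt_trichotomy c 0 with h0 | h0 | h0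
      · nlinarith
      · exact h0
      · nlinarith
    rw [hc0, mul_zero] at hc
    omega
  · rintro rfl
    refine ⟨i, ?_⟩
    cases m with
    | zero => omega
    | succ n => simp [Nat.succ_sub_one]; ring

lemma inp1_eta_eta {d k : ℕ} (hk : 2*k + 4 ≤ d) {i i' : ℕ}
    (hi : i < d - 1 - 2*k) (hi' : i' < d - 1 - 2*k) :
    inp1 d (etaG d k i) (etaG d k i')
      = if i = i' then ((d - 1 - 2*k : ℕ) : ℂ) else 0 := by
  set m := d - 1 - 2*k with hm
  have hm0 : m ≠ 0 := by omega
  have hpt : ∀ a : Fin d, (starRingEnd ℂ) (etaG d k i a) * etaG d k i' a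
      = if (a : ℕ) ∈ Finset.Icc k (d-2-k)
        then wN m ^ (((m-1)*i + i') * ((a:ℕ) - k)) else 0 := by
    intro a
    rw [etaG_apply, etaG_apply, ← hm]
    by_cases hmem : (a : ℕ) ∈ Finset.Icc k (d-2-k)
    · simp only [hmem, if_true]
      rw [conj_wN_pow hm0, ← pow_add]
      congr 1
      ring
    · simp [hmem]
  rw [inp1]
  simp only [hpt]
  rw [sum_fin_ite (Finset.Icc k (d-2-k))
    (fun t ht => by simp only [Finset.mem_Icc] at ht; omega)
    (fun t => wN m ^ (((m-1)*i + i') * (t - k)))]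
  have hicc : Finset.Icc k (d-2-k) = Finset.Icc k (k + (m-1)) := by
    congr 1
    omega
  rw [hicc, geom_shift hm0]
  simp only [dvd_combo_iff hm0 hi hi']

lemma inp1_xi_xi {d k : ℕ} (hk : 2*k + 4 ≤ d) {j j' : ℕ}
    (hj : j < d - 1 - 2*k) (hj' : j' < d - 1 - 2*k) :
    inp1 d (xiG d k j) (xiG d k j')
      = if j = j' then ((d - 1 - 2*k : ℕ) : ℂ) else 0 := by
  set m := d - 1 - 2*k with hm
  have hm0 : m ≠ 0 := by omega
  have hk2 : k + 2 ≤ d := by omega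
  have hpt : ∀ a : Fin d, (starRingEnd ℂ) (xiG d k j a) * xiG d k j' a
      = if (a : ℕ) ∈ Finset.Icc (k+1) (d-1-k)
        then wN m ^ (((m-1)*j + j') * ((a:ℕ) - (k+1))) else 0 := by
    intro a
    rw [xiG_apply d k j hk2, xiG_apply d k j' hk2, ← hm]
    by_cases hmem : (a : ℕ) ∈ Finset.Icc (k+1) (d-1-k)
    · simp only [hmem, if_true]
      rw [conj_wN_pow hm0, ← pow_add]
      congr 1
      ring
    · simp [hmem]
  rw [inp1]
  simp only [hpt]
  rw [sum_fin_ite (Finset.Icc (k+1) (d-1-k))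
    (fun t ht => by simp only [Finset.mem_Icc] at ht; omega)
    (fun t => wN m ^ (((m-1)*j + j') * (t - (k+1))))]
  have hicc : Finset.Icc (k+1) (d-1-k) = Finset.Icc (k+1) ((k+1) + (m-1)) := by
    congr 1
    omega
  rw [hicc, geom_shift hm0]
  simp only [dvd_combo_iff hm0 hj hj']

-- zero lemmas: e against eta/xi outside support
lemma z_e_eta {d k : ℕ} {a : ℕ} (had : a < d) (hout : a < k ∨ d - 2 - k < a) (i : ℕ) :
    inp1 d (eV d a) (etaG d k i) = 0 := by
  rw [inp1_e_left had, etaG_apply]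
  have : ((⟨a, had⟩ : Fin d) : ℕ) ∉ Finset.Icc k (d-2-k) := by
    simp only [Finset.mem_Icc]
    omega
  simp [this]

lemma z_e_xi {d k : ℕ} (hk : k + 2 ≤ d) {a : ℕ} (had : a < d)
    (hout : a < k + 1 ∨ d - 1 - k < a) (j : ℕ) :
    inp1 d (eV d a) (xiG d k j) = 0 := by
  rw [inp1_e_left had, xiG_apply d k j hk]
  have : ((⟨a, had⟩ : Fin d) : ℕ) ∉ Finset.Icc (k+1) (d-1-k) := by
    simp only [Finset.mem_Icc]
    omega
  simp [this]

lemma z_e_phi {d : ℕ} {a : ℕ} (had : a < d) (h1 : a ≠ (d-2)/2) (h2 : a ≠ d/2) (r : ℕ) :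
    inp1 d (eV d a) (phiE d r) = 0 := by
  rw [inp1_e_left had]
  unfold phiE eV
  simp [h1, h2]

-- the all-ones component of the stopper
lemma stop_comp (d : ℕ) :
    (fun a : Fin d => ∑ i ∈ Finset.range d, eV d i a) = fun _ => (1 : ℂ) := by
  funext a
  unfold eV
  rw [Finset.sum_ite_eq (Finset.range d) ((a : ℕ)) (fun _ => (1:ℂ))]
  simp [a.isLt]

lemma inp1_one_left {d : ℕ} (v : Fin d → ℂ) :
    inp1 d (fun _ => (1:ℂ)) v = ∑ a, v a := by
  simp [inp1]

lemma inp1_one_eta {d k : ℕ} (hk : 2*k + 4 ≤ d) {i : ℕ} (hi : i < d - 1 - 2*k)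
    (hi0 : i ≠ 0) : inp1 d (fun _ => (1:ℂ)) (etaG d k i) = 0 := by
  set m := d - 1 - 2*k with hm
  have hm0 : m ≠ 0 := by omega
  rw [inp1_one_left]
  simp only [etaG_apply, ← hm]
  rw [sum_fin_ite (Finset.Icc k (d-2-k))
    (fun t ht => by simp only [Finset.mem_Icc] at ht; omega)
    (fun t => wN m ^ (i * (t - k)))]
  have hicc : Finset.Icc k (d-2-k) = Finset.Icc k (k + (m-1)) := by
    congr 1
    omega
  rw [hicc, geom_shift hm0]
  have : ¬ m ∣ i := fun hdvd => by
    rcases hdvd with ⟨c, hc⟩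
    rcases c with _ | c
    · omega
    · nlinarith [Nat.le_mul_of_pos_right m (Nat.succ_pos c)]
  simp [this]

lemma inp1_one_xi {d k : ℕ} (hk : 2*k + 4 ≤ d) {j : ℕ} (hj : j < d - 1 - 2*k)
    (hj0 : j ≠ 0) : inp1 d (fun _ => (1:ℂ)) (xiG d k j) = 0 := by
  set m := d - 1 - 2*k with hm
  have hm0 : m ≠ 0 := by omega
  have hk2 : k + 2 ≤ d := by omega
  rw [inp1_one_left]
  simp only [xiG_apply d k _ hk2, ← hm]
  rw [sum_fin_ite (Finset.Icc (k+1) (d-1-k))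
    (fun t ht => by simp only [Finset.mem_Icc] at ht; omega)
    (fun t => wN m ^ (j * (t - (k+1))))]
  have hicc : Finset.Icc (k+1) (d-1-k) = Finset.Icc (k+1) ((k+1) + (m-1)) := by
    congr 1
    omega
  rw [hicc, geom_shift hm0]
  have : ¬ m ∣ j := fun hdvd => by
    rcases hdvd with ⟨c, hc⟩
    rcases c with _ | c
    · omega
    · nlinarith [Nat.le_mul_of_pos_right m (Nat.succ_pos c)]
  simp [this]

lemma sum_eV {d : ℕ} {t : ℕ} (ht : t < d) : ∑ a : Fin d, eV d t a = 1 := by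
  unfold eV
  have h : ∀ a : Fin d, ((a : ℕ) = t) = (a = ⟨t, ht⟩) := fun a => by simp [Fin.ext_iff]
  simp only [h]
  simp

lemma inp1_one_phi {d : ℕ} (hd : 4 ≤ d) (r : ℕ) :
    inp1 d (fun _ => (1:ℂ)) (phiE d r) = 1 + (-1:ℂ)^r := by
  rw [inp1_one_left]
  unfold phiE
  rw [Finset.sum_add_distrib, ← Finset.mul_sum]
  rw [sum_eV (by omega : (d-2)/2 < d), sum_eV (by omega : d/2 < d)]
  ring

lemma inp1_one_one {d : ℕ} :
    inp1 d (fun _ => (1:ℂ)) (fun _ => (1:ℂ)) = (d : ℂ) := by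
  simp [inp1]

-- phi expansion
lemma inp1_combo {d : ℕ} (x y x' y' : Fin d → ℂ) (c c' : ℂ) :
    inp1 d (fun a => x a + c * y a) (fun a => x' a + c' * y' a)
      = inp1 d x x' + c' * inp1 d x y' + (starRingEnd ℂ) c * inp1 d y x'
        + (starRingEnd ℂ) c * c' * inp1 d y y' := by
  simp only [inp1, Finset.mul_sum, ← Finset.sum_add_distrib]
  refine Finset.sum_congr rfl fun a _ => ?_
  simp only [map_add, map_mul]
  ring

lemma inp1_phi_phi {d : ℕ} (hd : 4 ≤ d) (hev : Even d) (r s : ℕ) :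
    inp1 d (phiE d r) (phiE d s) = 1 + (-1:ℂ)^(r+s) := by
  have hp : (d-2)/2 < d := by omega
  have hq : d/2 < d := by omega
  have hpq : (d-2)/2 ≠ d/2 := by omega
  unfold phiE
  rw [inp1_combo (eV d ((d-2)/2)) (eV d (d/2)) (eV d ((d-2)/2)) (eV d (d/2))
    ((-1:ℂ)^r) ((-1:ℂ)^s)]
  rw [inp1_e_e_self hp, inp1_e_e_self hq, inp1_e_e_ne hp hpq,
    inp1_e_e_ne hq (Ne.symm hpq)]
  have hc : (starRingEnd ℂ) ((-1:ℂ)^r) = (-1:ℂ)^r := by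
    simp [map_pow]
  rw [hc, pow_add]
  ring

def fC (d : ℕ) : ℕ × ℕ × ℕ × ℕ → (Fin d × Fin d × Fin d → ℂ)
  | (0, k, i, j) => tpv d (xiG d k j) (eV d k) (etaG d k i)
  | (1, k, i, j) => tpv d (xiG d k j) (etaG d k i) (eV d (d - 1 - k))
  | (2, k, i, j) => tpv d (eV d (d - 1 - k)) (xiG d k j) (etaG d k i)
  | (3, k, i, j) => tpv d (etaG d k i) (eV d (d - 1 - k)) (xiG d k j)
  | (4, k, i, j) => tpv d (etaG d k i) (xiG d k j) (eV d k)
  | (5, k, i, j) => tpv d (eV d k) (etaG d k i) (xiG d k j)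
  | (6, r, s, t) => tpv d (phiE d r) (phiE d s) (phiE d t)
  | (_+7, _, _, _) => tpv d (fun _ => (1:ℂ)) (fun _ => (1:ℂ)) (fun _ => (1:ℂ))

lemma stopD_eq (d : ℕ) : stopD d = fC d (7, 0, 0, 0) := by
  rw [stopD, stop_comp]
  simp [fC]

def S1 (d : ℕ) : Finset (ℕ × ℕ × ℕ × ℕ) :=
  (Finset.range ((d-4)/2 + 1)).biUnion (fun k =>
    (Finset.range 6) ×ˢ ({k} : Finset ℕ) ×ˢ
      (((Finset.range (d-1-2*k)) ×ˢ (Finset.range (d-1-2*k))).erase (0,0)))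

def S2 : Finset (ℕ × ℕ × ℕ × ℕ) :=
  ({6} : Finset ℕ) ×ˢ
    ((Finset.range 2 ×ˢ Finset.range 2 ×ˢ Finset.range 2).erase (0,0,0))

def S3 : Finset (ℕ × ℕ × ℕ × ℕ) := {(7,0,0,0)}

def SS (d : ℕ) : Finset (ℕ × ℕ × ℕ × ℕ) := S1 d ∪ S2 ∪ S3

lemma mem_S1 (d : ℕ) (c k i j : ℕ) : (c, k, i, j) ∈ S1 d ↔
    c < 6 ∧ k ≤ (d-4)/2 ∧ i < d-1-2*k ∧ j < d-1-2*k ∧ ¬(i = 0 ∧ j = 0) := by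
  simp only [S1, Finset.mem_biUnion, Finset.mem_range, Finset.mem_product,
    Finset.mem_singleton, Finset.mem_erase, Nat.lt_succ_iff, Prod.mk.injEq, ne_eq]
  aesop

lemma mem_S2 (c k i j : ℕ) : (c, k, i, j) ∈ S2 ↔
    c = 6 ∧ k < 2 ∧ i < 2 ∧ j < 2 ∧ ¬(k = 0 ∧ i = 0 ∧ j = 0) := by
  simp only [S2, Finset.mem_product, Finset.mem_singleton, Finset.mem_erase,
    Finset.mem_range, Prod.mk.injEq, ne_eq]
  aesop

lemma mem_SS (d : ℕ) (c k i j : ℕ) : (c, k, i, j) ∈ SS d ↔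
    (c < 6 ∧ k ≤ (d-4)/2 ∧ i < d-1-2*k ∧ j < d-1-2*k ∧ ¬(i = 0 ∧ j = 0)) ∨
    (c = 6 ∧ k < 2 ∧ i < 2 ∧ j < 2 ∧ ¬(k = 0 ∧ i = 0 ∧ j = 0)) ∨
    (c = 7 ∧ k = 0 ∧ i = 0 ∧ j = 0) := by
  simp only [SS, Finset.mem_union, mem_S1, mem_S2, S3, Finset.mem_singleton,
    Prod.mk.injEq]
  exact or_assoc

lemma inpD_zero_left (d : ℕ) (y : Fin d × Fin d × Fin d → ℂ) : inpD d 0 y = 0 := by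
  simp [inpD]

attribute [local irreducible] eV etaG xiG phiE tpv inp1 inpD wN

set_option maxHeartbeats 1000000 in
lemma orthCC_lt {d k k' : ℕ} (hk : 2*k+4 ≤ d) (hk' : 2*k'+4 ≤ d) (hkk : k < k')
    (c c' i j i' j' : ℕ) (hc : c < 6) (hc' : c' < 6) :
    inpD d (fC d (c,k,i,j)) (fC d (c',k',i',j')) = 0 := by
  have hkd : k < d := by omega
  have hed : d - 1 - k < d := by omega
  have hk2' : k' + 2 ≤ d := by omega
  have f1 : inp1 d (eV d k) (etaG d k' i') = 0 := z_e_eta hkd (Or.inl hkk) i'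
  have f2 : inp1 d (eV d k) (xiG d k' j') = 0 := z_e_xi hk2' hkd (Or.inl (by omega)) j'
  have f3 : inp1 d (eV d k) (eV d k') = 0 := inp1_e_e_ne hkd (by omega)
  have f4 : inp1 d (eV d k) (eV d (d-1-k')) = 0 := inp1_e_e_ne hkd (by omega)
  have f5 : inp1 d (eV d (d-1-k)) (etaG d k' i') = 0 := z_e_eta hed (Or.inr (by omega)) i'
  have f6 : inp1 d (eV d (d-1-k)) (xiG d k' j') = 0 := z_e_xi hk2' hed (Or.inr (by omega)) j'
  have f7 : inp1 d (eV d (d-1-k)) (eV d k') = 0 := inp1_e_e_ne hed (by omega)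
  have f8 : inp1 d (eV d (d-1-k)) (eV d (d-1-k')) = 0 := inp1_e_e_ne hed (by omega)
  interval_cases c <;> interval_cases c' <;> simp only [fC] <;>
    first
      | exact orth1 f1 | exact orth1 f2 | exact orth1 f3 | exact orth1 f4
      | exact orth1 f5 | exact orth1 f6 | exact orth1 f7 | exact orth1 f8
      | exact orth2 f1 | exact orth2 f2 | exact orth2 f3 | exact orth2 f4
      | exact orth2 f5 | exact orth2 f6 | exact orth2 f7 | exact orth2 f8
      | exact orth3 f1 | exact orth3 f2 | exact orth3 f3 | exact orth3 f4
      | exact orth3 f5 | exact orth3 f6 | exact orth3 f7 | exact orth3 f8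

set_option maxHeartbeats 1600000 in
lemma orthCC_same {d k : ℕ} (hk : 2*k+4 ≤ d) {c i j c' i' j' : ℕ} (hc : c < 6) (hc' : c' < 6)
    (hi : i < d-1-2*k) (hi' : i' < d-1-2*k) (hj : j < d-1-2*k) (hj' : j' < d-1-2*k)
    (hne : ¬(c = c' ∧ i = i' ∧ j = j')) :
    inpD d (fC d (c,k,i,j)) (fC d (c',k,i',j')) = 0 := by
  have hkd : k < d := by omega
  have hed : d-1-k < d := by omega
  have hk2 : k + 2 ≤ d := by omega
  have g1 : inp1 d (eV d k) (xiG d k j') = 0 := z_e_xi hk2 hkd (Or.inl (by omega)) j'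
  have g2 : inp1 d (xiG d k j) (eV d k) = 0 :=
    inp1_symm_zero (z_e_xi hk2 hkd (Or.inl (by omega)) j)
  have g3 : inp1 d (eV d (d-1-k)) (etaG d k i') = 0 := z_e_eta hed (Or.inr (by omega)) i'
  have g4 : inp1 d (etaG d k i) (eV d (d-1-k)) = 0 :=
    inp1_symm_zero (z_e_eta hed (Or.inr (by omega)) i)
  have g5 : inp1 d (eV d k) (eV d (d-1-k)) = 0 := inp1_e_e_ne hkd (by omega)
  have g6 : inp1 d (eV d (d-1-k)) (eV d k) = 0 := inp1_e_e_ne hed (by omega)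
  rcases eq_or_ne i i' with rfl | hI
  · rcases eq_or_ne j j' with rfl | hJ
    · have hcc : c ≠ c' := fun h => hne ⟨h, rfl, rfl⟩
      interval_cases c <;> interval_cases c' <;> simp only [fC] <;>
        first
          | exact absurd rfl hcc
          | exact orth1 g1 | exact orth1 g2 | exact orth1 g3 | exact orth1 g4
          | exact orth1 g5 | exact orth1 g6
          | exact orth2 g1 | exact orth2 g2 | exact orth2 g3 | exact orth2 g4
          | exact orth2 g5 | exact orth2 g6
          | exact orth3 g1 | exact orth3 g2 | exact orth3 g3 | exact orth3 g4
          | exact orth3 g5 | exact orth3 g6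
    · have g8 : inp1 d (xiG d k j) (xiG d k j') = 0 := by
        rw [inp1_xi_xi hk hj hj']
        simp [hJ]
      interval_cases c <;> interval_cases c' <;> simp only [fC] <;>
        first
          | exact orth1 g8 | exact orth2 g8 | exact orth3 g8
          | exact orth1 g1 | exact orth1 g2 | exact orth1 g3 | exact orth1 g4
          | exact orth1 g5 | exact orth1 g6
          | exact orth2 g1 | exact orth2 g2 | exact orth2 g3 | exact orth2 g4
          | exact orth2 g5 | exact orth2 g6
          | exact orth3 g1 | exact orth3 g2 | exact orth3 g3 | exact orth3 g4
          | exact orth3 g5 | exact orth3 g6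
  · have g7 : inp1 d (etaG d k i) (etaG d k i') = 0 := by
      rw [inp1_eta_eta hk hi hi']
      simp [hI]
    interval_cases c <;> interval_cases c' <;> simp only [fC] <;>
      first
        | exact orth1 g7 | exact orth2 g7 | exact orth3 g7
        | exact orth1 g1 | exact orth1 g2 | exact orth1 g3 | exact orth1 g4
        | exact orth1 g5 | exact orth1 g6
        | exact orth2 g1 | exact orth2 g2 | exact orth2 g3 | exact orth2 g4
        | exact orth2 g5 | exact orth2 g6
        | exact orth3 g1 | exact orth3 g2 | exact orth3 g3 | exact orth3 g4
        | exact orth3 g5 | exact orth3 g6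

lemma orth_C_A0 {d k : ℕ} (hev : Even d) (hk : 2*k+4 ≤ d)
    (c i j r s t : ℕ) (hc : c < 6) :
    inpD d (fC d (c,k,i,j)) (fC d (6,r,s,t)) = 0 := by
  obtain ⟨n, rfl⟩ := hev
  have h1 : ∀ r', inp1 (n+n) (eV (n+n) k) (phiE (n+n) r') = 0 := fun r' =>
    z_e_phi (by omega) (by omega) (by omega) r'
  have h2 : ∀ r', inp1 (n+n) (eV (n+n) ((n+n)-1-k)) (phiE (n+n) r') = 0 := fun r' =>
    z_e_phi (by omega) (by omega) (by omega) r'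
  interval_cases c <;> simp only [fC] <;>
    first
      | exact orth1 (h1 _) | exact orth2 (h1 _) | exact orth3 (h1 _)
      | exact orth1 (h2 _) | exact orth2 (h2 _) | exact orth3 (h2 _)

lemma orth_C_stop {d k : ℕ} (hk : 2*k+4 ≤ d) {c i j : ℕ} (hc : c < 6)
    (hi : i < d-1-2*k) (hj : j < d-1-2*k) (hij : ¬(i = 0 ∧ j = 0)) :
    inpD d (fC d (c,k,i,j)) (fC d (7,0,0,0)) = 0 := by
  by_cases hi0 : i = 0
  · have hj0 : j ≠ 0 := fun h => hij ⟨hi0, h⟩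
    have q2 : inp1 d (xiG d k j) (fun _ => (1:ℂ)) = 0 :=
      inp1_symm_zero (inp1_one_xi hk hj hj0)
    interval_cases c <;> simp only [fC] <;>
      first | exact orth1 q2 | exact orth2 q2 | exact orth3 q2
  · have q1 : inp1 d (etaG d k i) (fun _ => (1:ℂ)) = 0 :=
      inp1_symm_zero (inp1_one_eta hk hi hi0)
    interval_cases c <;> simp only [fC] <;>
      first | exact orth1 q1 | exact orth2 q1 | exact orth3 q1

lemma orth_A0_A0 {d : ℕ} (hd : 4 ≤ d) (hev : Even d) {r s t r' s' t' : ℕ}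
    (hr : r < 2) (hs : s < 2) (ht : t < 2) (hr' : r' < 2) (hs' : s' < 2) (ht' : t' < 2)
    (hne : ¬(r = r' ∧ s = s' ∧ t = t')) :
    inpD d (fC d (6,r,s,t)) (fC d (6,r',s',t')) = 0 := by
  have zphi : ∀ a b : ℕ, a < 2 → b < 2 → a ≠ b → inp1 d (phiE d a) (phiE d b) = 0 := by
    intro a b ha hb hab
    rw [inp1_phi_phi hd hev]
    interval_cases a <;> interval_cases b <;> first | exact absurd rfl hab | norm_num
  simp only [fC]
  by_cases h1 : r = r'
  · by_cases h2 : s = s'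
    · have h3 : t ≠ t' := fun h => hne ⟨h1, h2, h⟩
      exact orth3 (zphi _ _ ht ht' h3)
    · exact orth2 (zphi _ _ hs hs' h2)
  · exact orth1 (zphi _ _ hr hr' h1)

lemma orth_A0_stop {d : ℕ} (hd : 4 ≤ d) {r s t : ℕ} (hr : r < 2) (hs : s < 2) (ht : t < 2)
    (hne : ¬(r = 0 ∧ s = 0 ∧ t = 0)) :
    inpD d (fC d (6,r,s,t)) (fC d (7,0,0,0)) = 0 := by
  have zp : inp1 d (phiE d 1) (fun _ => (1:ℂ)) = 0 := by
    apply inp1_symm_zero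
    rw [inp1_one_phi hd]
    norm_num
  simp only [fC]
  have h1 : r = 1 ∨ s = 1 ∨ t = 1 := by omega
  rcases h1 with h | h | h
  · subst h
    exact orth1 zp
  · subst h
    exact orth2 zp
  · subst h
    exact orth3 zp

lemma main_orth (d : ℕ) (hd : 4 ≤ d) (hev : Even d) :
    ∀ a ∈ SS d, ∀ b ∈ SS d, a ≠ b → inpD d (fC d a) (fC d b) = 0 := by
  have hkk : ∀ k0 : ℕ, k0 ≤ (d-4)/2 → 2*k0+4 ≤ d := by
    obtain ⟨n, rfl⟩ := hev
    omega
  rintro ⟨c,k,i,j⟩ ha ⟨c',k',i',j'⟩ hb hne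
  rw [mem_SS] at ha hb
  rcases ha with ⟨hc,hk,hi,hj,hij⟩ | ⟨hc,hk,hi,hj,hkij⟩ | ⟨hc,hk,hi,hj⟩
  · rcases hb with ⟨hc',hk',hi',hj',hij'⟩ | ⟨hc',hk',hi',hj',hkij'⟩ | ⟨hc',hk',hi',hj'⟩
    · rcases lt_trichotomy k k' with h | h | h
      · exact orthCC_lt (hkk k hk) (hkk k' hk') h c c' i j i' j' hc hc'
      · subst h
        refine orthCC_same (hkk k hk) hc hc' hi hi' hj hj' ?_
        rintro ⟨rfl, rfl, rfl⟩
        exact hne rfl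
      · exact inpD_symm_zero (orthCC_lt (hkk k' hk') (hkk k hk) h c' c i' j' i j hc' hc)
    · subst hc'
      exact orth_C_A0 hev (hkk k hk) c i j k' i' j' hc
    · subst hc'
      subst hk'
      subst hi'
      subst hj'
      exact orth_C_stop (hkk k hk) hc hi hj hij
  · subst hc
    rcases hb with ⟨hc',hk',hi',hj',hij'⟩ | ⟨hc',hk',hi',hj',hkij'⟩ | ⟨hc',hk',hi',hj'⟩
    · exact inpD_symm_zero (orth_C_A0 hev (hkk k' hk') c' i' j' k i j hc')
    · subst hc'
      refine orth_A0_A0 hd hev hk hi hj hk' hi' hj' ?_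
      rintro ⟨rfl, rfl, rfl⟩
      exact hne rfl
    · subst hc'
      subst hk'
      subst hi'
      subst hj'
      exact orth_A0_stop hd hk hi hj hkij
  · subst hc
    subst hk
    subst hi
    subst hj
    rcases hb with ⟨hc',hk',hi',hj',hij'⟩ | ⟨hc',hk',hi',hj',hkij'⟩ | ⟨hc',hk',hi',hj'⟩
    · exact inpD_symm_zero (orth_C_stop (hkk k' hk') hc' hi' hj' hij')
    · subst hc'
      exact inpD_symm_zero (orth_A0_stop hd hk' hi' hj' hkij')
    · subst hc'
      subst hk'
      subst hi'
      subst hj'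
      exact absurd rfl hne

lemma main_nonzero (d : ℕ) (hd : 4 ≤ d) (hev : Even d) :
    ∀ a ∈ SS d, inpD d (fC d a) (fC d a) ≠ 0 := by
  have hkk : ∀ k0 : ℕ, k0 ≤ (d-4)/2 → 2*k0+4 ≤ d := by
    obtain ⟨n, rfl⟩ := hev
    omega
  rintro ⟨c,k,i,j⟩ ha
  rw [mem_SS] at ha
  rcases ha with ⟨hc,hk,hi,hj,_⟩ | ⟨hc,hk,hi,hj,_⟩ | ⟨hc,hk,hi,hj⟩
  · have hk4 : 2*k+4 ≤ d := hkk k hk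
    have hm : ((d-1-2*k : ℕ) : ℂ) ≠ 0 := by
      rw [Nat.cast_ne_zero]
      omega
    have he1 : inp1 d (eV d k) (eV d k) = 1 := inp1_e_e_self (by omega)
    have he2 : inp1 d (eV d (d-1-k)) (eV d (d-1-k)) = 1 := inp1_e_e_self (by omega)
    have hee : inp1 d (etaG d k i) (etaG d k i) = ((d-1-2*k : ℕ) : ℂ) := by
      rw [inp1_eta_eta hk4 hi hi]
      simp
    have hxx : inp1 d (xiG d k j) (xiG d k j) = ((d-1-2*k : ℕ) : ℂ) := by
      rw [inp1_xi_xi hk4 hj hj]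
      simp
    interval_cases c <;>
      simp only [fC] <;> rw [inpD_tpv] <;>
      simp only [hee, hxx, he1, he2, one_mul, mul_one] <;>
      exact mul_ne_zero hm hm
  · subst hc
    have hphi : ∀ r : ℕ, inp1 d (phiE d r) (phiE d r) = 2 := by
      intro r
      rw [inp1_phi_phi hd hev]
      rw [Even.neg_one_pow ⟨r, rfl⟩]
      norm_num
    simp only [fC]
    rw [inpD_tpv, hphi, hphi, hphi]
    norm_num
  · subst hc
    have hdc : (d : ℂ) ≠ 0 := by
      rw [Nat.cast_ne_zero]
      omega
    simp only [fC]
    rw [inpD_tpv, inp1_one_one]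
    exact mul_ne_zero (mul_ne_zero hdc hdc) hdc

lemma Ueven_eq (d : ℕ) (hd : 4 ≤ d) (hev : Even d) :
    Ueven d = fC d '' ↑(SS d) := by
  ext x
  simp only [Ueven, Cset, A0set, Set.mem_union, Set.mem_setOf_eq, Set.mem_singleton_iff,
    Set.mem_image, Finset.mem_coe]
  constructor
  · rintro ((⟨k, hk, hC⟩ | hA) | hstop)
    · rcases hC with ⟨i, j, hi, hj, hij, hx⟩
      have hmem : ∀ c : ℕ, c < 6 → (c,k,i,j) ∈ SS d := by
        intro c hc
        rw [mem_SS]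
        exact Or.inl ⟨hc, hk, hi, hj, hij⟩
      rcases hx with h | h | h | h | h | h
      · exact ⟨(0,k,i,j), hmem 0 (by norm_num), by rw [h]; simp [fC]⟩
      · exact ⟨(1,k,i,j), hmem 1 (by norm_num), by rw [h]; simp [fC]⟩
      · exact ⟨(2,k,i,j), hmem 2 (by norm_num), by rw [h]; simp [fC]⟩
      · exact ⟨(3,k,i,j), hmem 3 (by norm_num), by rw [h]; simp [fC]⟩
      · exact ⟨(4,k,i,j), hmem 4 (by norm_num), by rw [h]; simp [fC]⟩
      · exact ⟨(5,k,i,j), hmem 5 (by norm_num), by rw [h]; simp [fC]⟩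
    · rcases hA with ⟨r, s, t, hr, hs, ht, hrst, rfl⟩
      refine ⟨(6,r,s,t), ?_, by simp [fC]⟩
      rw [mem_SS]
      exact Or.inr (Or.inl ⟨rfl, hr, hs, ht, hrst⟩)
    · refine ⟨(7,0,0,0), ?_, ?_⟩
      · rw [mem_SS]
        exact Or.inr (Or.inr ⟨rfl, rfl, rfl, rfl⟩)
      · rw [hstop, stopD_eq]
  · rintro ⟨⟨c,k,i,j⟩, hmem, rfl⟩
    rw [mem_SS] at hmem
    rcases hmem with ⟨hc,hk,hi,hj,hij⟩ | ⟨hc,hk,hi,hj,hkij⟩ | ⟨hc,hk,hi,hj⟩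
    · refine Or.inl (Or.inl ⟨k, hk, i, j, hi, hj, hij, ?_⟩)
      interval_cases c
      · exact Or.inl (by simp [fC])
      · exact Or.inr (Or.inl (by simp [fC]))
      · exact Or.inr (Or.inr (Or.inl (by simp [fC])))
      · exact Or.inr (Or.inr (Or.inr (Or.inl (by simp [fC]))))
      · exact Or.inr (Or.inr (Or.inr (Or.inr (Or.inl (by simp [fC])))))
      · exact Or.inr (Or.inr (Or.inr (Or.inr (Or.inr (by simp [fC])))))
    · subst hc
      exact Or.inl (Or.inr ⟨k, i, j, hk, hi, hj, hkij, by simp [fC]⟩)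
    · subst hc
      subst hk
      subst hi
      subst hj
      exact Or.inr (stopD_eq d).symm

lemma sum_aux : ∀ t : ℕ,
    (∑ k ∈ Finset.range t, 6 * ((2*t+1-2*k) * (2*t+1-2*k) - 1)) + 8*(t+1) = 8*(t+1)^3 := by
  intro t
  induction t with
  | zero => norm_num
  | succ t IH =>
    rw [Finset.sum_range_succ']
    have hcg : ∀ k ∈ Finset.range t,
        6 * ((2*(t+1)+1-2*(k+1)) * (2*(t+1)+1-2*(k+1)) - 1)
          = 6 * ((2*t+1-2*k) * (2*t+1-2*k) - 1) := by
      intro k _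
      have : 2*(t+1)+1-2*(k+1) = 2*t+1-2*k := by omega
      rw [this]
    rw [Finset.sum_congr rfl hcg]
    have h0 : 6 * ((2*(t+1)+1-2*0) * (2*(t+1)+1-2*0) - 1) = 24*(t*t) + 72*t + 48 := by
      have hx : 2*(t+1)+1-2*0 = 2*t+3 := by omega
      rw [hx]
      have he : (2*t+3) * (2*t+3) = 4*(t*t) + 12*t + 9 := by ring
      rw [he]
      generalize t*t = u
      omega
    rw [h0]
    have e2 : 8*(t+1+1)^3 = 8*(t+1)^3 + (24*(t*t) + 72*t + 56) := by ring
    rw [e2, ← IH]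
    ring

lemma card_S2 : S2.card = 7 := by decide

lemma card_SS (d : ℕ) (hd : 4 ≤ d) (hev : Even d) :
    (SS d).card = d^3 - 4*d + 8 := by
  obtain ⟨n, rfl⟩ := hev
  have hn : 2 ≤ n := by omega
  have hdisj1 : Disjoint (S1 (n+n) ∪ S2) S3 := by
    rw [Finset.disjoint_left]
    rintro ⟨c,k,i,j⟩ ha hb
    simp only [S3, Finset.mem_singleton, Prod.mk.injEq] at hb
    obtain ⟨rfl, rfl, rfl, rfl⟩ := hb
    rcases Finset.mem_union.1 ha with h | h
    · rw [mem_S1] at h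
      omega
    · rw [mem_S2] at h
      omega
  have hdisj2 : Disjoint (S1 (n+n)) S2 := by
    rw [Finset.disjoint_left]
    rintro ⟨c,k,i,j⟩ ha hb
    rw [mem_S1] at ha
    rw [mem_S2] at hb
    omega
  rw [SS, Finset.card_union_of_disjoint hdisj1, Finset.card_union_of_disjoint hdisj2,
    card_S2]
  have hS3 : S3.card = 1 := rfl
  rw [hS3]
  have hcard1 : (S1 (n+n)).card
      = ∑ k ∈ Finset.range ((n+n-4)/2 + 1), 6 * ((n+n-1-2*k) * (n+n-1-2*k) - 1) := by
    rw [S1, Finset.card_biUnion]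
    · refine Finset.sum_congr rfl fun k hk => ?_
      rw [Finset.mem_range] at hk
      rw [Finset.card_product, Finset.card_product, Finset.card_erase_of_mem, Finset.card_product]
      · simp only [Finset.card_range, Finset.card_singleton]
        ring
      · rw [Finset.mem_product]
        constructor <;> simp only [Finset.mem_range] <;> omega
    · intro x hx y hy hxy
      rw [Function.onFun, Finset.disjoint_left]
      rintro ⟨c,k,i,j⟩ ha hb
      simp only [Finset.mem_product, Finset.mem_singleton] at ha hb
      exact hxy (ha.2.1 ▸ hb.2.1)
  rw [hcard1]
  have hrange : (n+n-4)/2 + 1 = n - 1 := by omega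
  rw [hrange]
  have hterm : ∀ k ∈ Finset.range (n-1),
      6 * ((n+n-1-2*k) * (n+n-1-2*k) - 1)
        = 6 * ((2*(n-1)+1-2*k) * (2*(n-1)+1-2*k) - 1) := by
    intro k _
    have : n+n-1-2*k = 2*(n-1)+1-2*k := by omega
    rw [this]
  rw [Finset.sum_congr rfl hterm]
  have hsum := sum_aux (n-1)
  have hn1 : n - 1 + 1 = n := by omega
  rw [hn1] at hsum
  have hcube : (n+n)^3 = 8*n^3 := by ring
  rw [hcube]
  omega

end UPB

/-- For every even d ≥ 4, the vectors of U_d^even are nonzero, pairwise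
orthogonal, and U_d^even has exactly d³ − 4d + 8 elements. -/
theorem Ueven_pairwise_orthogonal_nonzero (d : ℕ) (hd : 4 ≤ d) (heven : Even d) :
    (∀ x ∈ Ueven d, x ≠ 0) ∧
    (∀ x ∈ Ueven d, ∀ y ∈ Ueven d, x ≠ y → inpD d x y = 0) ∧
    (Ueven d).ncard = d ^ 3 - 4 * d + 8 := by
  have hU := UPB.Ueven_eq d hd heven
  have horth := UPB.main_orth d hd heven
  have hnz := UPB.main_nonzero d hd heven
  refine ⟨?_, ?_, ?_⟩
  · intro x hx
    rw [hU] at hx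
    obtain ⟨a, haS, rfl⟩ := hx
    intro h0
    apply hnz a (Finset.mem_coe.1 haS)
    rw [h0]
    exact UPB.inpD_zero_left d 0
  · intro x hx y hy hxy
    rw [hU] at hx hy
    obtain ⟨a, haS, rfl⟩ := hx
    obtain ⟨b, hbS, rfl⟩ := hy
    exact horth a (Finset.mem_coe.1 haS) b (Finset.mem_coe.1 hbS)
      (fun h => hxy (by rw [h]))
  · have hinj : Set.InjOn (UPB.fC d) ↑(UPB.SS d) := by
      intro a ha b hb hab
      by_contra hne
      have h0 := horth a (Finset.mem_coe.1 ha) b (Finset.mem_coe.1 hb) hne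
      rw [hab] at h0
      exact hnz b (Finset.mem_coe.1 hb) h0
    rw [hU, Set.ncard_image_of_injOn hinj, Set.ncard_coe_finset]
    exact UPB.card_SS d hd heven
end
end
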